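/- arXiv:1705.10704 — 5 statements merged into one kernel-verified Lean document; each statement's English description precedes it below -/
import Mathlib

section
/- Let T be an n×n complex matrix that is power bounded by C with minimal polynomial m(z) = ∏_{i=1}^d (z−λ_i), and suppose r := min_{1≤i≤d} |λ_i| > 0. Then T is invertible and for every ρ ∈ (0,1), ‖T⁻¹‖² ≤ C² · (ρ²/(1−ρ²)) · ( (1/(ρ²r²))^{d} − 1 ). -/
open PowerSeries Finset Complex

namespace InvBound

/-- shifted sequence -/
def sh (g : ℕ → ℂ) : ℕ → ℂ := fun k => match k with
  | 0 => 0
  | (k+1) => g k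

lemma summable_sh_normSq {g : ℕ → ℂ} (hg : Summable fun k => normSq (g k)) :
    Summable fun k => normSq (sh g k) := by
  rw [← summable_nat_add_iff 1]
  simpa [sh] using hg

lemma tsum_sh_normSq {g : ℕ → ℂ} (hg : Summable fun k => normSq (g k)) :
    ∑' k, normSq (sh g k) = ∑' k, normSq (g k) := by
  rw [Summable.tsum_eq_zero_add (summable_sh_normSq hg)]
  simp [sh]

lemma cross_summable (u v : ℕ → ℂ) (hu : Summable fun k => normSq (u k))
    (hv : Summable fun k => normSq (v k)) :
    Summable fun k => (u k * (starRingEnd ℂ) (v k)).re := by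
  apply Summable.of_abs
  apply Summable.of_nonneg_of_le (fun k => abs_nonneg _) ?_ ((hu.add hv).div_const 2)
  intro k
  have h1 : |(u k * (starRingEnd ℂ) (v k)).re| ≤ ‖u k * (starRingEnd ℂ) (v k)‖ :=
    Complex.abs_re_le_norm _
  rw [norm_mul, Complex.norm_conj] at h1
  nlinarith [sq_nonneg (‖u k‖ - ‖v k‖), Complex.sq_norm (u k),
    Complex.sq_norm (v k), norm_nonneg (u k), norm_nonneg (v k)]

lemma shift_iso (g : ℕ → ℂ) (hg : Summable fun k => normSq (g k)) (a : ℂ) :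
    ∑' k, normSq (sh g k - a * g k) = ∑' k, normSq (g k - (starRingEnd ℂ) a * sh g k) := by
  have hsh : Summable fun k => normSq (sh g k) := summable_sh_normSq hg
  have hag : Summable fun k => normSq (a * g k) := by
    simpa [map_mul] using hg.mul_left (normSq a)
  have hash : Summable fun k => normSq ((starRingEnd ℂ) a * sh g k) := by
    simpa [map_mul] using hsh.mul_left (normSq ((starRingEnd ℂ) a))
  have hcross : Summable fun k => (sh g k * (starRingEnd ℂ) (a * g k)).re :=
    cross_summable _ _ hsh hag
  have hcross' : Summable fun k => (g k * (starRingEnd ℂ) ((starRingEnd ℂ) a * sh g k)).re :=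
    cross_summable _ _ hg hash
  have hEq : ∀ k, (g k * (starRingEnd ℂ) ((starRingEnd ℂ) a * sh g k)).re
      = (sh g k * (starRingEnd ℂ) (a * g k)).re := by
    intro k
    rw [← Complex.conj_re (g k * (starRingEnd ℂ) ((starRingEnd ℂ) a * sh g k))]
    congr 1
    simp only [map_mul, Complex.conj_conj]
    ring
  calc ∑' k, normSq (sh g k - a * g k)
      = ∑' k, (normSq (sh g k) + normSq (a * g k)
          - 2 * (sh g k * (starRingEnd ℂ) (a * g k)).re) := by
        exact tsum_congr fun k => Complex.normSq_sub _ _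
    _ = (∑' k, (normSq (sh g k) + normSq (a * g k)))
          - ∑' k, 2 * (sh g k * (starRingEnd ℂ) (a * g k)).re := by
        exact Summable.tsum_sub (hsh.add hag) (hcross.mul_left 2)
    _ = (∑' k, normSq (sh g k)) + (∑' k, normSq (a * g k))
          - 2 * ∑' k, (sh g k * (starRingEnd ℂ) (a * g k)).re := by
        rw [Summable.tsum_add hsh hag, tsum_mul_left]
    _ = (∑' k, normSq (g k)) + (∑' k, normSq ((starRingEnd ℂ) a * sh g k))
          - 2 * ∑' k, (g k * (starRingEnd ℂ) ((starRingEnd ℂ) a * sh g k)).re := by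
        rw [tsum_sh_normSq hg]
        congr 1
        · congr 1
          · simp only [map_mul]
            rw [tsum_mul_left, tsum_mul_left, tsum_sh_normSq hg]
            simp [Complex.normSq_conj]
        · rw [tsum_congr hEq]
    _ = ∑' k, (normSq (g k) + normSq ((starRingEnd ℂ) a * sh g k)
          - 2 * (g k * (starRingEnd ℂ) ((starRingEnd ℂ) a * sh g k)).re) := by
        rw [Summable.tsum_sub (hg.add hash) (hcross'.mul_left 2), Summable.tsum_add hg hash, tsum_mul_left]
    _ = ∑' k, normSq (g k - (starRingEnd ℂ) a * sh g k) := by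
        exact tsum_congr fun k => (Complex.normSq_sub _ _).symm


/-- geometric decay of coefficients -/
def GD (f : ℕ → ℂ) : Prop := ∃ K s : ℝ, 0 ≤ s ∧ s < 1 ∧ ∀ k, ‖f k‖ ≤ K * s ^ k

lemma GD.K_nonneg {f : ℕ → ℂ} {K s : ℝ} (h : ∀ k, ‖f k‖ ≤ K * s ^ k) : 0 ≤ K := by
  have := h 0
  simpa using le_trans (norm_nonneg _) this

lemma GD.summable_norm {f : ℕ → ℂ} (h : GD f) : Summable fun k => ‖f k‖ := by
  obtain ⟨K, s, hs0, hs1, hb⟩ := h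
  exact Summable.of_nonneg_of_le (fun k => norm_nonneg _) (fun k => hb k)
    ((summable_geometric_of_lt_one hs0 hs1).mul_left K)

lemma GD.summable_normSq {f : ℕ → ℂ} (h : GD f) : Summable fun k => normSq (f k) := by
  obtain ⟨K, s, hs0, hs1, hb⟩ := h
  have hK : 0 ≤ K := GD.K_nonneg hb
  apply Summable.of_nonneg_of_le (fun k => normSq_nonneg _)
    (f := fun k => (K ^ 2) * (s ^ 2) ^ k)
  · intro k
    have h1 : ‖f k‖ ^ 2 ≤ (K * s ^ k) ^ 2 :=
      pow_le_pow_left₀ (norm_nonneg _) (hb k) 2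
    calc normSq (f k) = ‖f k‖ ^ 2 := by rw [← Complex.sq_norm]
      _ ≤ (K * s ^ k) ^ 2 := h1
      _ = K ^ 2 * (s ^ 2) ^ k := by ring
  · exact (summable_geometric_of_lt_one (by positivity)
      (by nlinarith)).mul_left _

lemma GD.mul {F G : PowerSeries ℂ} (hF : GD (fun k => coeff k F))
    (hG : GD (fun k => coeff k G)) : GD (fun k => coeff k (F * G)) := by
  obtain ⟨K, s, hs0, hs1, hKb⟩ := hF
  obtain ⟨L, t, ht0, ht1, hLb⟩ := hG
  have hK : 0 ≤ K := GD.K_nonneg hKb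
  have hL : 0 ≤ L := GD.K_nonneg hLb
  set u : ℝ := max s t with hu_def
  have hu0 : 0 ≤ u := le_trans hs0 (le_max_left _ _)
  have hu1 : u < 1 := max_lt hs1 ht1
  set v : ℝ := (1 + u) / 2 with hv_def
  have hv0 : 0 < v := by positivity
  have hv1 : v < 1 := by simp only [hv_def]; linarith
  have huv : u < v := by simp only [hv_def]; linarith
  set q : ℝ := u / v with hq_def
  have hq0 : 0 ≤ q := by positivity
  have hq1 : q < 1 := (div_lt_one hv0).mpr huv
  have hqsum : Summable fun n : ℕ => ((n : ℝ) + 1) * q ^ n := by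
    have h1 : Summable fun n : ℕ => (n : ℝ) * q ^ n := by
      simpa using summable_pow_mul_geometric_of_norm_lt_one 1 (r := q)
        (by rwa [Real.norm_eq_abs, _root_.abs_of_nonneg hq0])
    simpa [add_mul, one_mul] using h1.add (summable_geometric_of_lt_one hq0 hq1)
  set M : ℝ := ∑' n : ℕ, ((n : ℝ) + 1) * q ^ n with hM_def
  refine ⟨K * L * M, v, le_of_lt hv0, hv1, fun n => ?_⟩
  have hcoeff : ‖coeff n (F * G)‖ ≤ ((n : ℝ) + 1) * (K * L * u ^ n) := by
    rw [PowerSeries.coeff_mul]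
    calc ‖∑ p ∈ antidiagonal n, coeff p.1 F * coeff p.2 G‖
        ≤ ∑ p ∈ antidiagonal n, ‖coeff p.1 F * coeff p.2 G‖ := norm_sum_le _ _
      _ ≤ ∑ _p ∈ antidiagonal n, K * L * u ^ n := by
          apply Finset.sum_le_sum
          intro p hp
          rw [norm_mul]
          have h1 : ‖coeff p.1 F‖ ≤ K * s ^ p.1 := hKb p.1
          have h2 : ‖coeff p.2 G‖ ≤ L * t ^ p.2 := hLb p.2
          have h3 : s ^ p.1 * t ^ p.2 ≤ u ^ n := by
            rw [← Finset.HasAntidiagonal.mem_antidiagonal.mp hp, pow_add]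
            exact mul_le_mul (pow_le_pow_left₀ hs0 (le_max_left _ _) _)
              (pow_le_pow_left₀ ht0 (le_max_right _ _) _) (by positivity) (by positivity)
          calc ‖coeff p.1 F‖ * ‖coeff p.2 G‖ ≤ (K * s ^ p.1) * (L * t ^ p.2) := by
                exact mul_le_mul h1 h2 (norm_nonneg _) (by positivity)
            _ = K * L * (s ^ p.1 * t ^ p.2) := by ring
            _ ≤ K * L * u ^ n := by
                exact mul_le_mul_of_nonneg_left h3 (by positivity)
      _ = ((n : ℝ) + 1) * (K * L * u ^ n) := by
          rw [Finset.sum_const, Finset.Nat.card_antidiagonal]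
          push_cast
          ring
  have huqv : u ^ n = q ^ n * v ^ n := by
    rw [← mul_pow, hq_def, div_mul_cancel₀ _ (ne_of_gt hv0)]
  have hqM : ((n : ℝ) + 1) * q ^ n ≤ M := by
    apply Summable.le_tsum hqsum n
    intro j _
    positivity
  calc ‖coeff n (F * G)‖ ≤ ((n : ℝ) + 1) * (K * L * u ^ n) := hcoeff
    _ = (((n : ℝ) + 1) * q ^ n) * (K * L * v ^ n) := by rw [huqv]; ring
    _ ≤ M * (K * L * v ^ n) := by
        apply mul_le_mul_of_nonneg_right hqM (by positivity)
    _ = K * L * M * v ^ n := by ring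

lemma GD.one : GD (fun k => coeff k (1 : PowerSeries ℂ)) := by
  refine ⟨1, 1/2, by norm_num, by norm_num, fun k => ?_⟩
  show ‖coeff k (1 : PowerSeries ℂ)‖ ≤ _
  rw [PowerSeries.coeff_one]
  cases k with
  | zero => norm_num
  | succ k =>
    simp only [Nat.succ_ne_zero, if_false, norm_zero]
    positivity

lemma GD.geo (a : ℂ) (ha : ‖a‖ < 1) : GD (fun k => coeff k (PowerSeries.mk fun k => a ^ k)) := by
  refine ⟨1, ‖a‖, norm_nonneg _, ha, fun k => ?_⟩
  show ‖coeff k (PowerSeries.mk fun k => a ^ k)‖ ≤ _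
  rw [PowerSeries.coeff_mk, norm_pow, one_mul]

lemma GD.linear (c : ℂ) : GD (fun k => coeff k (1 - C c * X)) := by
  refine ⟨max 1 (2 * ‖c‖), 1/2, by norm_num, by norm_num, fun k => ?_⟩
  show ‖coeff k (1 - C c * X)‖ ≤ _
  rw [map_sub, PowerSeries.coeff_one, PowerSeries.coeff_C_mul, PowerSeries.coeff_X]
  match k with
  | 0 => simpa using le_max_left 1 (2 * ‖c‖)
  | 1 =>
    norm_num
    have h := le_max_right (1:ℝ) (2 * ‖c‖)
    linarith
  | (k+2) =>
    have h2 : (k:ℕ)+2 ≠ 1 := by omega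
    simp only [if_neg (Nat.succ_ne_zero (k+1)), if_neg h2, mul_zero, sub_zero, norm_zero]
    positivity

lemma coeff_one_sub_C_mul (c : ℂ) (h : PowerSeries ℂ) (n : ℕ) :
    coeff n ((1 - C c * X) * h) = coeff n h - c * sh (fun k => coeff k h) n := by
  have heq : (1 - C c * X) * h = h - C c * (X * h) := by ring
  rw [heq, map_sub, PowerSeries.coeff_C_mul]
  cases n with
  | zero => simp [sh, PowerSeries.coeff_zero_X_mul]
  | succ n => rw [PowerSeries.coeff_succ_X_mul]; rfl

lemma geo_inv (a : ℂ) : (1 - C a * X) * PowerSeries.mk (fun k => a ^ k) = 1 := by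
  ext n
  rw [coeff_one_sub_C_mul, PowerSeries.coeff_one, PowerSeries.coeff_mk]
  cases n with
  | zero => simp [sh]
  | succ n =>
    simp only [sh, PowerSeries.coeff_mk, Nat.succ_ne_zero, if_false]
    ring

/-- the factor (1 - z/a)/(1 - conj(a) z) as a power series -/
noncomputable def Gfac (a : ℂ) : PowerSeries ℂ :=
  (1 - C a⁻¹ * X) * PowerSeries.mk fun k => ((starRingEnd ℂ) a) ^ k

lemma GD.Gfac (a : ℂ) (ha : ‖a‖ < 1) : GD (fun k => coeff k (InvBound.Gfac a)) :=
  GD.mul (GD.linear _) (GD.geo _ (by rwa [RCLike.norm_conj]))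

lemma constantCoeff_Gfac (a : ℂ) : coeff 0 (Gfac a) = 1 := by
  rw [Gfac, PowerSeries.coeff_zero_eq_constantCoeff, map_mul]
  simp

noncomputable def Pprod {d : ℕ} (α : Fin d → ℂ) (s : Finset (Fin d)) : PowerSeries ℂ :=
  ∏ i ∈ s, Gfac (α i)

lemma l2_prod {d : ℕ} (α : Fin d → ℂ) (hα0 : ∀ i, α i ≠ 0) (hα1 : ∀ i, ‖α i‖ < 1)
    (s : Finset (Fin d)) :
    GD (fun k => coeff k (Pprod α s)) ∧ coeff 0 (Pprod α s) = 1 ∧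
      ∑' k, normSq (coeff k (Pprod α s)) = ∏ i ∈ s, (normSq (α i))⁻¹ := by
  induction s using Finset.cons_induction with
  | empty =>
    refine ⟨by simpa [Pprod] using GD.one, by simp [Pprod], ?_⟩
    simp only [Pprod, Finset.prod_empty]
    have : (fun k => normSq (coeff k (1 : PowerSeries ℂ))) = fun k => if k = 0 then 1 else 0 := by
      funext k
      rw [PowerSeries.coeff_one]
      split <;> simp
    rw [this, tsum_ite_eq]
  | cons i s his ih =>
    obtain ⟨hGD, h0, hsum⟩ := ih
    have hnew : Pprod α (Finset.cons i s his) = Gfac (α i) * Pprod α s := Finset.prod_cons _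
    set g : ℕ → ℂ := fun k =>
      coeff k (PowerSeries.mk (fun k => ((starRingEnd ℂ) (α i)) ^ k) * Pprod α s) with hg_def
    have hgGD : GD g := GD.mul (GD.geo _ (by rw [RCLike.norm_conj]; exact hα1 i)) hGD
    have hAs_eq : ∀ k, coeff k (Pprod α s) = g k - (starRingEnd ℂ) (α i) * sh g k := by
      intro k
      conv_lhs => rw [show Pprod α s
        = (1 - C ((starRingEnd ℂ) (α i)) * X)
          * (PowerSeries.mk (fun k => ((starRingEnd ℂ) (α i)) ^ k) * Pprod α s) by
          rw [← mul_assoc, geo_inv, one_mul]]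
      exact coeff_one_sub_C_mul _ _ _
    have hnew_eq : ∀ k, coeff k (Pprod α (Finset.cons i s his))
        = (-(α i)⁻¹) * (sh g k - (α i) * g k) := by
      intro k
      rw [hnew, Gfac, mul_assoc]
      rw [coeff_one_sub_C_mul]
      have hinv : (α i)⁻¹ * (α i) = 1 := inv_mul_cancel₀ (hα0 i)
      show g k - (α i)⁻¹ * sh g k = _
      have hid : -(α i)⁻¹ * (sh g k - α i * g k)
          = (α i)⁻¹ * (α i) * g k - (α i)⁻¹ * sh g k := by ring
      rw [hid, hinv, one_mul]
    refine ⟨by rw [hnew]; exact GD.mul (GD.Gfac _ (hα1 i)) hGD, ?_, ?_⟩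
    · rw [hnew, PowerSeries.coeff_zero_eq_constantCoeff, map_mul]
      have h1 : constantCoeff (Gfac (α i)) = 1 := by
        rw [← PowerSeries.coeff_zero_eq_constantCoeff]; exact constantCoeff_Gfac _
      have h2 : constantCoeff (Pprod α s) = 1 := by
        rw [← PowerSeries.coeff_zero_eq_constantCoeff]; exact h0
      rw [h1, h2, one_mul]
    · have step1 : ∑' k, normSq (coeff k (Pprod α (Finset.cons i s his)))
          = (normSq (α i))⁻¹ * ∑' k, normSq (sh g k - (α i) * g k) := by
        rw [← tsum_mul_left]
        apply tsum_congr
        intro k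
        rw [hnew_eq k, map_mul, Complex.normSq_neg, map_inv₀]
      rw [step1, shift_iso g (hgGD.summable_normSq) (α i)]
      have step2 : ∑' k, normSq (g k - (starRingEnd ℂ) (α i) * sh g k)
          = ∑' k, normSq (coeff k (Pprod α s)) := by
        apply tsum_congr
        intro k
        rw [hAs_eq k]
      rw [step2, hsum, Finset.prod_cons]

lemma tsum_CS (x y : ℕ → ℝ) (hx : ∀ k, 0 ≤ x k) (hy : ∀ k, 0 ≤ y k)
    (hx2 : Summable fun k => x k ^ 2) (hy2 : Summable fun k => y k ^ 2) :
    ∑' k, x k * y k ≤ Real.sqrt (∑' k, x k ^ 2) * Real.sqrt (∑' k, y k ^ 2) := by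
  set X := ∑' k, x k ^ 2 with hX_def
  set Y := ∑' k, y k ^ 2 with hY_def
  have hX0 : 0 ≤ X := tsum_nonneg fun k => sq_nonneg _
  have hY0 : 0 ≤ Y := tsum_nonneg fun k => sq_nonneg _
  have hxy : Summable fun k => x k * y k := by
    apply Summable.of_nonneg_of_le (fun k => mul_nonneg (hx k) (hy k))
      (fun k => ?_) ((hx2.add hy2).div_const 2)
    nlinarith [sq_nonneg (x k - y k)]
  have key : ∀ t : ℝ, 0 < t → ∑' k, x k * y k ≤ (t * X + Y / t) / 2 := by
    intro t ht
    have hterm : ∀ k, x k * y k ≤ (t * x k ^ 2 + y k ^ 2 / t) / 2 := by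
      intro k
      rw [le_div_iff₀ (by norm_num : (0:ℝ) < 2), ← sub_nonneg]
      have hexp : t * x k ^ 2 + y k ^ 2 / t - x k * y k * 2 = (t * x k - y k) ^ 2 / t := by
        field_simp
        ring
      rw [hexp]
      positivity
    calc ∑' k, x k * y k ≤ ∑' k, (t * x k ^ 2 + y k ^ 2 / t) / 2 := by
          apply Summable.tsum_le_tsum hterm hxy
          exact ((hx2.mul_left t).add (hy2.div_const t)).div_const 2
      _ = (t * X + Y / t) / 2 := by
          rw [tsum_div_const, Summable.tsum_add (hx2.mul_left t) (hy2.div_const t), tsum_mul_left,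
            tsum_div_const]
  by_cases hX : X = 0
  · have hx0 : ∀ k, x k = 0 := by
      intro k
      have h1 : x k ^ 2 ≤ X := Summable.le_tsum hx2 k fun j _ => sq_nonneg _
      nlinarith [hx k]
    have hz : ∑' k, x k * y k = 0 := by
      calc ∑' k, x k * y k = ∑' (_ : ℕ), (0:ℝ) :=
            tsum_congr fun k => by rw [hx0 k, zero_mul]
        _ = 0 := tsum_zero
    rw [hz]
    positivity
  · by_cases hY : Y = 0
    · have hy0 : ∀ k, y k = 0 := by
        intro k
        have h1 : y k ^ 2 ≤ Y := Summable.le_tsum hy2 k fun j _ => sq_nonneg _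
        nlinarith [hy k]
      have hz : ∑' k, x k * y k = 0 := by
        calc ∑' k, x k * y k = ∑' (_ : ℕ), (0:ℝ) :=
              tsum_congr fun k => by rw [hy0 k, mul_zero]
          _ = 0 := tsum_zero
      rw [hz]
      positivity
    · have hXpos : 0 < X := lt_of_le_of_ne hX0 (Ne.symm hX)
      have hYpos : 0 < Y := lt_of_le_of_ne hY0 (Ne.symm hY)
      set sX := Real.sqrt X with hsX
      set sY := Real.sqrt Y with hsY
      have hsXpos : 0 < sX := Real.sqrt_pos.mpr hXpos
      have hsYpos : 0 < sY := Real.sqrt_pos.mpr hYpos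
      have hXsq : sX ^ 2 = X := Real.sq_sqrt hX0
      have hYsq : sY ^ 2 = Y := Real.sq_sqrt hY0
      have := key (sY / sX) (by positivity)
      calc ∑' k, x k * y k ≤ (sY / sX * X + Y / (sY / sX)) / 2 := this
        _ = sX * sY := by
            rw [← hXsq, ← hYsq]
            field_simp
            ring

section Op

variable {E : Type*} [NormedAddCommGroup E] [NormedSpace ℂ E] [CompleteSpace E]

lemma summable_op (T : E →L[ℂ] E) {C : ℝ} (hpb : ∀ j : ℕ, ‖T ^ j‖ ≤ C) {f : ℕ → ℂ}
    (hf : Summable fun k => ‖f k‖) : Summable fun k => f k • T ^ k := by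
  apply Summable.of_norm_bounded (g := fun k => ‖f k‖ * C) (hf.mul_right C)
  intro k
  rw [norm_smul (f k) (T ^ k)]
  exact mul_le_mul_of_nonneg_left (hpb k) (norm_nonneg _)

lemma opSum_mul (T : E →L[ℂ] E) {C : ℝ} (hpb : ∀ j : ℕ, ‖T ^ j‖ ≤ C)
    (F G : PowerSeries ℂ) (hF : Summable fun k => ‖coeff k F‖)
    (hG : Summable fun k => ‖coeff k G‖) :
    (∑' k, coeff k (F * G) • T ^ k)
      = (∑' k, coeff k F • T ^ k) * (∑' k, coeff k G • T ^ k) := by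
  have hC0 : (0:ℝ) ≤ C := le_trans (norm_nonneg _) (hpb 0)
  have hF' : Summable fun k => ‖coeff k F • T ^ k‖ := by
    apply Summable.of_nonneg_of_le (fun k => norm_nonneg _) (fun k => ?_) (hF.mul_right C)
    rw [norm_smul (coeff k F) (T ^ k)]
    exact mul_le_mul_of_nonneg_left (hpb k) (norm_nonneg _)
  have hG' : Summable fun k => ‖coeff k G • T ^ k‖ := by
    apply Summable.of_nonneg_of_le (fun k => norm_nonneg _) (fun k => ?_) (hG.mul_right C)
    rw [norm_smul (coeff k G) (T ^ k)]
    exact mul_le_mul_of_nonneg_left (hpb k) (norm_nonneg _)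
  rw [tsum_mul_tsum_eq_tsum_sum_antidiagonal_of_summable_norm hF' hG']
  apply tsum_congr
  intro n
  rw [PowerSeries.coeff_mul, Finset.sum_smul]
  apply Finset.sum_congr rfl
  intro p hp
  rw [smul_mul_smul_comm, ← pow_add, Finset.HasAntidiagonal.mem_antidiagonal.mp hp]

end Op

lemma rescale_C' (ρ c : ℂ) : PowerSeries.rescale ρ (C c) = C c := by
  ext n
  rw [PowerSeries.coeff_rescale, PowerSeries.coeff_C]
  split
  · next h => subst h; simp
  · simp

lemma normSq_eq_norm_sq (z : ℂ) : normSq z = ‖z‖ ^ 2 := by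
  rw [← Complex.sq_norm]

set_option maxHeartbeats 1000000 in
lemma key_construction {E : Type*} [NormedAddCommGroup E] [NormedSpace ℂ E] [CompleteSpace E]
    (T : E →L[ℂ] E) (C : ℝ) (hC : 1 ≤ C) (hpb : ∀ j : ℕ, ‖T ^ j‖ ≤ C)
    (d : ℕ) (hd : 0 < d) (lam : Fin d → ℂ)
    (hmin : minpoly ℂ T = ∏ i : Fin d, (Polynomial.X - Polynomial.C (lam i)))
    (r : ℝ) (hrpos : 0 < r) (hrle : ∀ i, r ≤ ‖lam i‖) (hlam1 : ∀ i, ‖lam i‖ ≤ 1)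
    (ρ : ℝ) (hρ0 : 0 < ρ) (hρ1 : ρ < 1) :
    ∃ S : E →L[ℂ] E, T * S = 1 ∧ S * T = 1 ∧
      ‖S‖ ^ 2 ≤ C ^ 2 * (ρ ^ 2 / (1 - ρ ^ 2)) * ((1 / (ρ ^ 2 * r ^ 2)) ^ d - 1) := by
  have hC0 : (0:ℝ) ≤ C := le_trans zero_le_one hC
  have h1ρ2 : (0:ℝ) < 1 - ρ ^ 2 := by nlinarith
  have hlam0 : ∀ i, lam i ≠ 0 := by
    intro i h
    have h1 := hrle i
    rw [h, norm_zero] at h1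
    linarith
  set α : Fin d → ℂ := fun i => (ρ:ℂ) * lam i with hα_def
  have hαnorm : ∀ i, ‖α i‖ = ρ * ‖lam i‖ := by
    intro i
    rw [hα_def]
    simp only [norm_mul, Complex.norm_real, Real.norm_eq_abs]
    rw [abs_of_pos hρ0]
  have hα0 : ∀ i, α i ≠ 0 := fun i =>
    mul_ne_zero (by exact_mod_cast ne_of_gt hρ0) (hlam0 i)
  have hα1 : ∀ i, ‖α i‖ < 1 := by
    intro i
    rw [hαnorm i]
    nlinarith [hlam1 i, norm_nonneg (lam i)]
  obtain ⟨hGD_A, hA0, hA_sum⟩ := l2_prod α hα0 hα1 Finset.univ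
  set A := Pprod α Finset.univ with hA_def
  set B := PowerSeries.rescale (ρ:ℂ) A with hB_def
  have hb_eq : ∀ k, coeff k B = (ρ:ℂ) ^ k * coeff k A := fun k =>
    PowerSeries.coeff_rescale A (ρ:ℂ) k
  have hbnorm : ∀ k, ‖coeff k B‖ = ρ ^ k * ‖coeff k A‖ := by
    intro k
    rw [hb_eq k, norm_mul, norm_pow, Complex.norm_real, Real.norm_eq_abs, abs_of_pos hρ0]
  have hGD_B : GD (fun k => coeff k B) := by
    obtain ⟨K, s, hs0, hs1, hbd⟩ := hGD_A
    refine ⟨K, ρ * s, by positivity, by nlinarith, fun k => ?_⟩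
    rw [hbnorm k, mul_pow]
    calc ρ ^ k * ‖coeff k A‖ ≤ ρ ^ k * (K * s ^ k) :=
          mul_le_mul_of_nonneg_left (hbd k) (by positivity)
      _ = K * (ρ ^ k * s ^ k) := by ring
  -- factorization B = Mp * U
  set U : PowerSeries ℂ :=
    ∏ i : Fin d, PowerSeries.mk fun k => ((ρ:ℂ) ^ 2 * (starRingEnd ℂ) (lam i)) ^ k with hU_def
  set Mp : Polynomial ℂ :=
    ∏ i : Fin d, (1 - Polynomial.C (lam i)⁻¹ * Polynomial.X) with hMp_def
  have hres : ∀ i : Fin d, PowerSeries.rescale (ρ:ℂ) (Gfac (α i))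
      = ((1 - Polynomial.C (lam i)⁻¹ * Polynomial.X : Polynomial ℂ) : PowerSeries ℂ)
        * PowerSeries.mk fun k => ((ρ:ℂ) ^ 2 * (starRingEnd ℂ) (lam i)) ^ k := by
    intro i
    rw [Gfac, map_mul]
    have hc1 : ((1 - Polynomial.C (lam i)⁻¹ * Polynomial.X : Polynomial ℂ) : PowerSeries ℂ)
        = 1 - PowerSeries.C (lam i)⁻¹ * X := by push_cast; rfl
    rw [hc1]
    congr 1
    · rw [map_sub, map_one, map_mul, PowerSeries.rescale_X, rescale_C']
      have hinv : (α i)⁻¹ * (ρ:ℂ) = (lam i)⁻¹ := by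
        have hρne : (ρ:ℂ) ≠ 0 := by exact_mod_cast ne_of_gt hρ0
        rw [hα_def]
        show ((ρ:ℂ) * lam i)⁻¹ * (ρ:ℂ) = (lam i)⁻¹
        rw [mul_inv, mul_right_comm, inv_mul_cancel₀ hρne, one_mul]
      have : PowerSeries.C (α i)⁻¹ * (PowerSeries.C (ρ:ℂ) * X) = PowerSeries.C (lam i)⁻¹ * X := by
        rw [← mul_assoc, ← map_mul, hinv]
      rw [this]
    · rw [PowerSeries.rescale_mk]
      apply congrArg
      funext k
      have hconj : (starRingEnd ℂ) (α i) = (ρ:ℂ) * (starRingEnd ℂ) (lam i) := by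
        rw [hα_def, map_mul, Complex.conj_ofReal]
      rw [hconj]
      ring
  have hBMU : B = (Mp : PowerSeries ℂ) * U := by
    rw [hB_def, hA_def, Pprod, map_prod, Finset.prod_congr rfl (fun i _ => hres i),
      Finset.prod_mul_distrib]
    congr 1
    rw [hMp_def, ← Polynomial.coeToPowerSeries.ringHom_apply, map_prod]
    apply Finset.prod_congr rfl
    intro i _
    rw [Polynomial.coeToPowerSeries.ringHom_apply]
  have hMpT : Polynomial.aeval T Mp = 0 := by
    have hMp_eq : Mp = (∏ i : Fin d, Polynomial.C (-(lam i)⁻¹)) * minpoly ℂ T := by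
      rw [hmin, hMp_def, ← Finset.prod_mul_distrib]
      apply Finset.prod_congr rfl
      intro i _
      have hinv : -(lam i)⁻¹ * lam i = -1 := by
        rw [neg_mul, inv_mul_cancel₀ (hlam0 i)]
      rw [mul_sub, ← Polynomial.C_mul, hinv]
      simp only [map_neg, Polynomial.C_1]
      ring
    rw [hMp_eq, map_mul, minpoly.aeval, mul_zero]
  have hMp_coeff_zero : ∀ k, k ∉ Finset.range (Mp.natDegree + 1)
      → coeff k (↑Mp : PowerSeries ℂ) = 0 := by
    intro k hk
    rw [Polynomial.coeff_coe]
    apply Polynomial.coeff_eq_zero_of_natDegree_lt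
    simp only [Finset.mem_range] at hk
    omega
  have hMp_summ : Summable fun k => ‖coeff k (↑Mp : PowerSeries ℂ)‖ := by
    apply summable_of_ne_finset_zero (s := Finset.range (Mp.natDegree + 1))
    intro k hk
    rw [hMp_coeff_zero k hk, norm_zero]
  have hU_GD : GD (fun k => coeff k U) := by
    rw [hU_def]
    apply Finset.prod_induction _ (fun F => GD fun k => coeff k F)
      (fun F G hF hG => GD.mul hF hG) GD.one
    intro i _
    apply GD.geo
    rw [norm_mul, RCLike.norm_conj, norm_pow, Complex.norm_real, Real.norm_eq_abs, abs_of_pos hρ0]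
    nlinarith [hlam1 i, norm_nonneg (lam i)]
  -- the operator series of B sums to zero
  have hopMp : (∑' k, coeff k (↑Mp : PowerSeries ℂ) • T ^ k) = 0 := by
    have h1 : (∑' k, coeff k (↑Mp : PowerSeries ℂ) • T ^ k)
        = ∑ k ∈ Finset.range (Mp.natDegree + 1), coeff k (↑Mp : PowerSeries ℂ) • T ^ k := by
      apply tsum_eq_sum
      intro k hk
      rw [hMp_coeff_zero k hk, zero_smul]
    rw [h1, Finset.sum_congr rfl
      (fun k _ => by rw [Polynomial.coeff_coe] :
        ∀ k ∈ Finset.range (Mp.natDegree + 1),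
          coeff k (↑Mp : PowerSeries ℂ) • T ^ k = Mp.coeff k • T ^ k),
      ← Polynomial.aeval_eq_sum_range, hMpT]
  have hopB : (∑' k, coeff k B • T ^ k) = 0 := by
    rw [hBMU, opSum_mul T hpb _ _ hMp_summ hU_GD.summable_norm, hopMp, zero_mul]
  -- the candidate inverse S
  have hsum_b_norm : Summable fun k => ‖coeff k B‖ := hGD_B.summable_norm
  have hbS : Summable fun k => coeff k B • T ^ k := summable_op T hpb hsum_b_norm
  have hsum_shift : Summable fun k => ‖(-(coeff (k+1) B) : ℂ)‖ := by
    simp only [norm_neg]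
    exact (summable_nat_add_iff (f := fun k => ‖coeff k B‖) 1).mpr hsum_b_norm
  set S : E →L[ℂ] E := ∑' k, (-(coeff (k+1) B)) • T ^ k with hS_def
  have hS_sum : Summable fun k => (-(coeff (k+1) B)) • T ^ k :=
    summable_op T hpb hsum_shift
  have hb0 : coeff 0 B = 1 := by rw [hb_eq 0, pow_zero, one_mul, hA0]
  have htail : (∑' k, coeff (k+1) B • T ^ (k+1)) = -1 := by
    have h0 := Summable.tsum_eq_zero_add hbS
    rw [hopB, hb0, pow_zero, one_smul] at h0
    exact eq_neg_of_add_eq_zero_right h0.symm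
  have hTS : T * S = 1 := by
    calc T * S = ∑' k, T * ((-(coeff (k+1) B)) • T ^ k) :=
          (Summable.tsum_mul_left T hS_sum).symm
      _ = ∑' k, -(coeff (k+1) B • T ^ (k+1)) := by
          apply tsum_congr
          intro k
          rw [mul_smul_comm, ← pow_succ', neg_smul]
      _ = -∑' k, coeff (k+1) B • T ^ (k+1) := by rw [tsum_neg]
      _ = 1 := by rw [htail, neg_neg]
  have hST : S * T = 1 := by
    calc S * T = ∑' k, ((-(coeff (k+1) B)) • T ^ k) * T :=
          (Summable.tsum_mul_right T hS_sum).symm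
      _ = ∑' k, -(coeff (k+1) B • T ^ (k+1)) := by
          apply tsum_congr
          intro k
          rw [smul_mul_assoc, ← pow_succ, neg_smul]
      _ = -∑' k, coeff (k+1) B • T ^ (k+1) := by rw [tsum_neg]
      _ = 1 := by rw [htail, neg_neg]
  refine ⟨S, hTS, hST, ?_⟩
  -- the norm estimate
  have hQsum : Summable fun k => ρ ^ (k+1) * ‖coeff (k+1) A‖ := by
    have h1 : Summable fun k => ‖coeff (k+1) B‖ :=
      (summable_nat_add_iff (f := fun k => ‖coeff k B‖) 1).mpr hsum_b_norm
    apply h1.congr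
    intro k
    rw [hbnorm (k+1)]
  set Q : ℝ := ∑' k, ρ ^ (k+1) * ‖coeff (k+1) A‖ with hQ_def
  have hQnonneg : 0 ≤ Q :=
    tsum_nonneg fun k => mul_nonneg (by positivity) (norm_nonneg _)
  have hnormS_sum : Summable fun k => ‖(-(coeff (k+1) B)) • T ^ k‖ := by
    apply Summable.of_nonneg_of_le (fun k => norm_nonneg _) (fun k => ?_)
      (hsum_shift.mul_right C)
    rw [norm_smul (-(coeff (k+1) B)) (T ^ k)]
    exact mul_le_mul_of_nonneg_left (hpb k) (norm_nonneg _)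
  have hSle : ‖S‖ ≤ C * Q := by
    calc ‖S‖ ≤ ∑' k, ‖(-(coeff (k+1) B)) • T ^ k‖ := norm_tsum_le_tsum_norm hnormS_sum
      _ ≤ ∑' k, ‖coeff (k+1) B‖ * C := by
          apply Summable.tsum_le_tsum (fun k => ?_) hnormS_sum
            ((((summable_nat_add_iff (f := fun k => ‖coeff k B‖) 1).mpr
              hsum_b_norm)).mul_right C)
          rw [norm_smul (-(coeff (k+1) B)) (T ^ k), norm_neg]
          exact mul_le_mul_of_nonneg_left (hpb k) (norm_nonneg _)
      _ = C * Q := by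
          rw [hQ_def, ← Summable.tsum_mul_left C hQsum]
          apply tsum_congr
          intro k
          rw [hbnorm (k+1)]
          ring
  -- Cauchy-Schwarz
  have hx2sum : Summable fun k => (ρ ^ (k+1)) ^ 2 := by
    apply Summable.congr (f := fun k => (ρ^2) * (ρ^2) ^ k)
    · exact (summable_geometric_of_lt_one (by positivity) (by nlinarith)).mul_left _
    · intro k
      ring
  have hy2sum : Summable fun k => ‖coeff (k+1) A‖ ^ 2 := by
    have h1 : Summable fun k => normSq (coeff (k+1) A) :=
      (summable_nat_add_iff (f := fun k => normSq (coeff k A)) 1).mpr hGD_A.summable_normSq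
    apply h1.congr
    intro k
    rw [normSq_eq_norm_sq]
  have hX2 : ∑' k, (ρ ^ (k+1)) ^ 2 = ρ ^ 2 / (1 - ρ ^ 2) := by
    rw [tsum_congr (fun k => by ring : ∀ k : ℕ, (ρ ^ (k+1)) ^ 2 = ρ^2 * (ρ^2) ^ k),
      tsum_mul_left, tsum_geometric_of_lt_one (by positivity) (by nlinarith), div_eq_mul_inv]
  have hY2 : ∑' k, ‖coeff (k+1) A‖ ^ 2 = (∏ i : Fin d, (normSq (α i))⁻¹) - 1 := by
    have h0 := Summable.tsum_eq_zero_add hGD_A.summable_normSq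
    rw [hA_sum, hA0] at h0
    have h1 : normSq 1 = 1 := by simp
    rw [h1] at h0
    have h2 : ∑' k, ‖coeff (k+1) A‖ ^ 2 = ∑' k, normSq (coeff (k+1) A) :=
      tsum_congr fun k => (normSq_eq_norm_sq _).symm
    rw [h2]
    linarith
  have hCS := tsum_CS (fun k => ρ ^ (k+1)) (fun k => ‖coeff (k+1) A‖)
    (fun k => by positivity) (fun k => norm_nonneg _) hx2sum hy2sum
  have hprod_bound : (∏ i : Fin d, (normSq (α i))⁻¹) ≤ (1 / (ρ ^ 2 * r ^ 2)) ^ d := by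
    have hfac : ∀ i : Fin d, (normSq (α i))⁻¹ ≤ 1 / (ρ ^ 2 * r ^ 2) := by
      intro i
      rw [one_div]
      apply inv_anti₀ (by positivity)
      rw [normSq_eq_norm_sq, hαnorm i]
      calc ρ ^ 2 * r ^ 2 ≤ ρ ^ 2 * ‖lam i‖ ^ 2 := by
            apply mul_le_mul_of_nonneg_left ?_ (by positivity)
            nlinarith [hrle i, norm_nonneg (lam i)]
        _ = (ρ * ‖lam i‖) ^ 2 := by ring
    calc ∏ i : Fin d, (normSq (α i))⁻¹ ≤ ∏ _i : Fin d, (1 / (ρ ^ 2 * r ^ 2)) :=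
          Finset.prod_le_prod (fun i _ => inv_nonneg.mpr (normSq_nonneg _))
            (fun i _ => hfac i)
      _ = (1 / (ρ ^ 2 * r ^ 2)) ^ d := by
          rw [Finset.prod_const, Finset.card_univ, Fintype.card_fin]
  have hY2nonneg : 0 ≤ ∑' k, ‖coeff (k+1) A‖ ^ 2 := tsum_nonneg fun k => sq_nonneg _
  calc ‖S‖ ^ 2 ≤ (C * Q) ^ 2 := pow_le_pow_left₀ (norm_nonneg S) hSle 2
    _ = C ^ 2 * Q ^ 2 := by ring
    _ ≤ C ^ 2 * ((ρ ^ 2 / (1 - ρ ^ 2)) * ((∏ i : Fin d, (normSq (α i))⁻¹) - 1)) := by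
        apply mul_le_mul_of_nonneg_left ?_ (by positivity)
        have h1 : Q ≤ Real.sqrt (ρ ^ 2 / (1 - ρ ^ 2))
            * Real.sqrt (∑' k, ‖coeff (k+1) A‖ ^ 2) := by
          rw [← hX2]
          exact hCS
        calc Q ^ 2 ≤ (Real.sqrt (ρ ^ 2 / (1 - ρ ^ 2))
              * Real.sqrt (∑' k, ‖coeff (k+1) A‖ ^ 2)) ^ 2 :=
              pow_le_pow_left₀ hQnonneg h1 2
          _ = (ρ ^ 2 / (1 - ρ ^ 2)) * (∑' k, ‖coeff (k+1) A‖ ^ 2) := by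
              rw [mul_pow, Real.sq_sqrt (by positivity), Real.sq_sqrt hY2nonneg]
          _ = (ρ ^ 2 / (1 - ρ ^ 2)) * ((∏ i : Fin d, (normSq (α i))⁻¹) - 1) := by
              rw [hY2]
    _ ≤ C ^ 2 * ((ρ ^ 2 / (1 - ρ ^ 2)) * ((1 / (ρ ^ 2 * r ^ 2)) ^ d - 1)) := by
        apply mul_le_mul_of_nonneg_left ?_ (by positivity)
        apply mul_le_mul_of_nonneg_left ?_ (by positivity)
        linarith
    _ = C ^ 2 * (ρ ^ 2 / (1 - ρ ^ 2)) * ((1 / (ρ ^ 2 * r ^ 2)) ^ d - 1) := by ring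

lemma eig_le_one {E : Type*} [NormedAddCommGroup E] [NormedSpace ℂ E]
    (T : E →L[ℂ] E) (C : ℝ) (hpb : ∀ j : ℕ, ‖T ^ j‖ ≤ C)
    {d : ℕ} (hd : 0 < d) (lam : Fin d → ℂ)
    (hmin : minpoly ℂ T = ∏ i : Fin d, (Polynomial.X - Polynomial.C (lam i)))
    (i : Fin d) : ‖lam i‖ ≤ 1 := by
  by_contra hgt
  push_neg at hgt
  set q : Polynomial ℂ :=
    ∏ j ∈ Finset.univ.erase i, (Polynomial.X - Polynomial.C (lam j)) with hq_def
  have hfac : minpoly ℂ T = (Polynomial.X - Polynomial.C (lam i)) * q := by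
    rw [hmin, hq_def]
    exact (Finset.mul_prod_erase _ _ (Finset.mem_univ i)).symm
  have hq0 : q ≠ 0 := by
    rw [hq_def]
    apply Finset.prod_ne_zero_iff.mpr
    intro j _
    exact Polynomial.X_sub_C_ne_zero _
  have hdeg1 : q.natDegree = d - 1 := by
    rw [hq_def, Polynomial.natDegree_prod _ _ (fun j _ => Polynomial.X_sub_C_ne_zero _)]
    simp [Polynomial.natDegree_X_sub_C, Finset.card_erase_of_mem]
  have hdeg2 : (minpoly ℂ T).natDegree = d := by
    rw [hmin, Polynomial.natDegree_prod _ _ (fun j _ => Polynomial.X_sub_C_ne_zero _)]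
    simp [Polynomial.natDegree_X_sub_C]
  have hqT : Polynomial.aeval T q ≠ 0 := by
    intro h
    have hdvd := minpoly.dvd ℂ T h
    have hle := Polynomial.natDegree_le_of_dvd hdvd hq0
    omega
  obtain ⟨w, hw⟩ : ∃ w, (Polynomial.aeval T q) w ≠ 0 := by
    by_contra h
    push_neg at h
    exact hqT (ContinuousLinearMap.ext fun w => by rw [h w]; rfl)
  set v := (Polynomial.aeval T q) w with hv_def
  have hTv : T v = lam i • v := by
    have h0 : (Polynomial.aeval T (minpoly ℂ T)) w = 0 := by rw [minpoly.aeval]; rfl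
    rw [hfac, map_mul] at h0
    have h1 : (Polynomial.aeval T (Polynomial.X - Polynomial.C (lam i))) v = 0 := by
      rw [hv_def, ← ContinuousLinearMap.mul_apply]
      exact h0
    rw [map_sub, Polynomial.aeval_X, Polynomial.aeval_C, ContinuousLinearMap.sub_apply,
      Algebra.algebraMap_eq_smul_one] at h1
    have h2 : (lam i • (1 : E →L[ℂ] E)) v = lam i • v := rfl
    rw [h2] at h1
    exact sub_eq_zero.mp h1
  have hpow : ∀ j : ℕ, (T ^ j) v = (lam i) ^ j • v := by
    intro j
    induction j with
    | zero => simp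
    | succ j ih =>
      rw [pow_succ, ContinuousLinearMap.mul_apply, hTv, map_smul, ih, smul_smul, pow_succ]
      rw [mul_comm]
  have hvpos : 0 < ‖v‖ := norm_pos_iff.mpr hw
  have hbound : ∀ j : ℕ, ‖lam i‖ ^ j ≤ C := by
    intro j
    have h1 : ‖(T ^ j) v‖ ≤ C * ‖v‖ :=
      le_trans ((T ^ j).le_opNorm v) (mul_le_mul_of_nonneg_right (hpb j) (norm_nonneg v))
    rw [hpow j, norm_smul, norm_pow] at h1
    exact le_of_mul_le_mul_right h1 hvpos
  obtain ⟨j, hj⟩ := pow_unbounded_of_one_lt C hgt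
  exact absurd (hbound j) (not_le.mpr hj)

end InvBound

/-- If T is power bounded by C with minimal polynomial ∏_{i=1}^d (z−λ_i) and
r := min_i |λ_i| > 0, then T is invertible and for every ρ ∈ (0,1),
‖T⁻¹‖² ≤ C²·(ρ²/(1−ρ²))·((1/(ρ²r²))^d − 1). -/
theorem inverse_squared_bound
    {E : Type*} [NormedAddCommGroup E] [NormedSpace ℂ E] [FiniteDimensional ℂ E]
    (n : ℕ) (hn : 1 ≤ n) (hdim : Module.finrank ℂ E = n)
    (T : E →L[ℂ] E) (C : ℝ) (hC : 1 ≤ C) (hpb : ∀ j : ℕ, ‖T ^ j‖ ≤ C)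
    (d : ℕ) (hd : 0 < d) (lam : Fin d → ℂ)
    (hmin : minpoly ℂ T = ∏ i : Fin d, (Polynomial.X - Polynomial.C (lam i)))
    (r : ℝ)
    (hr : r = Finset.inf' Finset.univ (Finset.univ_nonempty_iff.mpr ⟨⟨0, hd⟩⟩)
      (fun i => ‖lam i‖))
    (hrpos : 0 < r) :
    ∃ S : E →L[ℂ] E, T * S = 1 ∧ S * T = 1 ∧
      ∀ ρ : ℝ, 0 < ρ → ρ < 1 →
        ‖S‖ ^ 2 ≤ C ^ 2 * (ρ ^ 2 / (1 - ρ ^ 2)) * ((1 / (ρ ^ 2 * r ^ 2)) ^ d - 1) := by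
  have hrle : ∀ i, r ≤ ‖lam i‖ := by
    intro i
    rw [hr]
    exact Finset.inf'_le _ (Finset.mem_univ i)
  have hlam1 : ∀ i, ‖lam i‖ ≤ 1 := fun i => InvBound.eig_le_one T C hpb hd lam hmin i
  have key : ∀ ρ : ℝ, 0 < ρ → ρ < 1 → ∃ S : E →L[ℂ] E, T * S = 1 ∧ S * T = 1 ∧
      ‖S‖ ^ 2 ≤ C ^ 2 * (ρ ^ 2 / (1 - ρ ^ 2)) * ((1 / (ρ ^ 2 * r ^ 2)) ^ d - 1) :=
    fun ρ h0 h1 =>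
      InvBound.key_construction T C hC hpb d hd lam hmin r hrpos hrle hlam1 ρ h0 h1
  obtain ⟨S, hTS, hST, _⟩ := key (1/2) (by norm_num) (by norm_num)
  refine ⟨S, hTS, hST, ?_⟩
  intro ρ hρ0 hρ1
  obtain ⟨S', hTS', hST', hb'⟩ := key ρ hρ0 hρ1
  have hSS : S = S' := by
    calc S = S * 1 := (mul_one S).symm
      _ = S * (T * S') := by rw [hTS']
      _ = (S * T) * S' := (mul_assoc _ _ _).symm
      _ = S' := by rw [hST, one_mul]
  rw [hSS]
  exact hb'
end

section
/- Fix λ ∈ (0,1), set α₀ = (1−λ)/(1+λ), and fix α ∈ (0, α₀). Then there exist constants M > 0, q ∈ (0,1) and an integer N such that for all n ≥ N and all integers k ≥ 0 with k ≤ αn or k ≥ n/α, one has |c_{n,k}| ≤ M·qⁿ; i.e., the Taylor coefficients of (1−z²)((z−λ)/(1−λz))ⁿ decay exponentially in n outside the range αn ≤ k ≤ n/α. -/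
open Metric Complex FormalMultilinearSeries Real
open scoped NNReal

lemma coeff_bound (lam : ℝ) (hl0 : 0 < lam)
    (c : ℕ → ℕ → ℂ)
    (hc : ∀ n : ℕ, 1 ≤ n → ∀ z : ℂ, ‖z‖ < 1 →
      Summable (fun k : ℕ => c n k * z ^ k) ∧
      ∑' k : ℕ, c n k * z ^ k =
        (1 - z ^ 2) * ((z - (lam : ℂ)) / (1 - (lam : ℂ) * z)) ^ n)
    (n : ℕ) (hn : 1 ≤ n) (R : ℝ) (hR0 : 0 < R) (hR : R * lam < 1)
    (B : ℝ)
    (hB : ∀ z : ℂ, ‖z‖ = R →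
      ‖(1 - z ^ 2) * ((z - (lam : ℂ)) / (1 - (lam : ℂ) * z)) ^ n‖ ≤ B)
    (k : ℕ) : ‖c n k‖ ≤ B * (R⁻¹) ^ k := by
  set g : ℂ → ℂ := fun z => (1 - z ^ 2) * ((z - (lam : ℂ)) / (1 - (lam : ℂ) * z)) ^ n with hg
  have hdiff : DifferentiableOn ℂ g (closedBall 0 R) := by
    intro z hz
    have hzn : ‖z‖ ≤ R := by simpa [mem_closedBall_zero_iff] using hz
    have hne : (1 : ℂ) - (lam : ℂ) * z ≠ 0 := by
      intro h
      have h1 : (1 : ℂ) = (lam : ℂ) * z := by linear_combination h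
      have : (1 : ℝ) = ‖(lam : ℂ) * z‖ := by rw [← h1]; simp
      rw [norm_mul, Complex.norm_real, Real.norm_of_nonneg hl0.le] at this
      nlinarith [norm_nonneg z]
    have h1 : DifferentiableAt ℂ (fun z : ℂ => 1 - z ^ 2) z := by fun_prop
    have h2 : DifferentiableAt ℂ (fun z : ℂ => ((z - (lam : ℂ)) / (1 - (lam : ℂ) * z)) ^ n) z :=
      by fun_prop (disch := exact hne)
    exact (h1.mul h2).differentiableWithinAt
  have hR0' : (0 : NNReal) < R.toNNReal := by simpa using hR0
  have hRc : ((R.toNNReal : ℝ)) = R := Real.coe_toNNReal _ hR0.le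
  have hps : HasFPowerSeriesOnBall g (cauchyPowerSeries g 0 R.toNNReal) 0 R.toNNReal := by
    refine DifferentiableOn.hasFPowerSeriesOnBall ?_ hR0'
    rwa [hRc]
  set Q : FormalMultilinearSeries ℂ ℂ ℂ := ofScalars ℂ (c n) with hQ
  have hrad : 1 ≤ Q.radius := by
    refine ENNReal.le_of_forall_nnreal_lt fun r hr => ?_
    have hr1 : (r : ℝ) < 1 := by exact_mod_cast hr
    have hsum := (hc n hn (r : ℂ) (by simpa using hr1)).1
    refine Q.le_radius_of_summable ?_
    have hs2 := summable_norm_iff.mpr hsum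
    have hfe : (fun k : ℕ => ‖Q k‖ * (r : ℝ) ^ k) = fun k : ℕ => ‖c n k * (r : ℂ) ^ k‖ := by
      funext k
      rw [hQ, ofScalars_norm, norm_mul, norm_pow]
      norm_num
    rw [hfe]
    exact hs2
  have hQball : HasFPowerSeriesOnBall Q.sum Q 0 Q.radius :=
    Q.hasFPowerSeriesOnBall (lt_of_lt_of_le zero_lt_one hrad)
  have heq : Q.sum =ᶠ[nhds (0 : ℂ)] g := by
    refine Filter.eventually_of_mem (Metric.ball_mem_nhds 0 zero_lt_one) fun z hz => ?_
    have hz1 : ‖z‖ < 1 := by simpa [mem_ball_zero_iff] using hz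
    have h := (hc n hn z hz1).2
    have hQs : Q.sum z = ∑' k, c n k • z ^ k := ofScalars_sum_eq (c n) z
    rw [hQs]
    simpa [smul_eq_mul] using h
  have hQat : HasFPowerSeriesAt g Q 0 := hQball.hasFPowerSeriesAt.congr heq
  have hpq : cauchyPowerSeries g 0 R.toNNReal = Q :=
    hps.hasFPowerSeriesAt.eq_formalMultilinearSeries hQat
  have hnorm : ‖c n k‖ = ‖cauchyPowerSeries g 0 R.toNNReal k‖ := by
    rw [hpq, hQ, ofScalars_norm]
  rw [hnorm, hRc]
  have hle := norm_cauchyPowerSeries_le g 0 R k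
  refine hle.trans ?_
  have hInt : (∫ θ : ℝ in (0)..2 * Real.pi, ‖g (circleMap 0 R θ)‖) ≤ 2 * Real.pi * B := by
    have hb : ∀ θ ∈ Set.uIoc (0 : ℝ) (2 * Real.pi), ‖‖g (circleMap 0 R θ)‖‖ ≤ B := by
      intro θ _
      rw [norm_norm]
      refine hB _ ?_
      have := norm_circleMap_zero R θ
      simpa [abs_of_pos hR0] using this
    have hni := intervalIntegral.norm_integral_le_of_norm_le_const hb
    have h2 : |2 * Real.pi - 0| = 2 * Real.pi := by
      rw [sub_zero, abs_of_pos Real.two_pi_pos]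
    rw [h2] at hni
    calc (∫ θ : ℝ in (0)..2 * Real.pi, ‖g (circleMap 0 R θ)‖)
        ≤ ‖∫ θ : ℝ in (0)..2 * Real.pi, ‖g (circleMap 0 R θ)‖‖ := le_abs_self _
      _ ≤ B * (2 * Real.pi) := hni
      _ = 2 * Real.pi * B := by ring
  have habs : |R|⁻¹ ^ k = (R⁻¹) ^ k := by rw [abs_of_pos hR0]
  rw [habs]
  have hp : (0:ℝ) ≤ (R⁻¹) ^ k := by positivity
  refine mul_le_mul_of_nonneg_right ?_ hp
  have h2pi : (0:ℝ) < (2 * Real.pi)⁻¹ := by positivity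
  calc (2 * Real.pi)⁻¹ * ∫ θ : ℝ in (0)..2 * Real.pi, ‖g (circleMap 0 R θ)‖
      ≤ (2 * Real.pi)⁻¹ * (2 * Real.pi * B) := mul_le_mul_of_nonneg_left hInt h2pi.le
    _ = B := by field_simp

lemma norm_sq_expand (lam : ℝ) (z : ℂ) :
    ‖z - (lam : ℂ)‖ ^ 2 = (z.re - lam) ^ 2 + z.im ^ 2 ∧
    ‖1 - (lam : ℂ) * z‖ ^ 2 = (1 - lam * z.re) ^ 2 + (lam * z.im) ^ 2 := by
  constructor
  · rw [Complex.sq_norm, Complex.normSq_apply]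
    simp only [Complex.sub_re, Complex.sub_im, Complex.ofReal_re, Complex.ofReal_im]
    ring
  · rw [Complex.sq_norm, Complex.normSq_apply]
    simp only [Complex.sub_re, Complex.sub_im, Complex.one_re, Complex.one_im, Complex.mul_re,
      Complex.mul_im, Complex.ofReal_re, Complex.ofReal_im]
    ring

lemma norm_sq_circle (r : ℝ) (z : ℂ) (hz : ‖z‖ = r) : z.re ^ 2 + z.im ^ 2 = r ^ 2 := by
  have h : ‖z‖ ^ 2 = r ^ 2 := by rw [hz]
  rw [Complex.sq_norm, Complex.normSq_apply] at h
  linear_combination h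

lemma blaschke_bound_small (lam r : ℝ) (hl0 : 0 < lam) (hl1 : lam < 1)
    (hr0 : 0 < r) (hr1 : r ≤ 1) (z : ℂ) (hz : ‖z‖ = r) :
    ‖(z - (lam : ℂ)) / (1 - (lam : ℂ) * z)‖ ≤ (r + lam) / (1 + lam * r) := by
  obtain ⟨h1, h2⟩ := norm_sq_expand lam z
  have habz := norm_sq_circle r z hz
  have hare : -r ≤ z.re := by nlinarith [sq_nonneg z.im, sq_nonneg (z.re + r)]
  have hden : (0:ℝ) < ‖1 - (lam : ℂ) * z‖ := by
    have : 1 - lam * r ≤ ‖1 - (lam : ℂ) * z‖ := by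
      calc 1 - lam * r = ‖(1:ℂ)‖ - ‖(lam : ℂ) * z‖ := by
            rw [norm_mul, Complex.norm_real, Real.norm_of_nonneg hl0.le, hz]; simp
        _ ≤ ‖1 - (lam : ℂ) * z‖ := norm_sub_norm_le _ _
    nlinarith
  rw [norm_div, div_le_div_iff₀ hden (by nlinarith)]
  have key : (‖z - (lam : ℂ)‖ * (1 + lam * r)) ^ 2 ≤ ((r + lam) * ‖1 - (lam : ℂ) * z‖) ^ 2 := by
    rw [mul_pow, mul_pow, h1, h2]
    have e1 : ((z.re - lam) ^ 2 + z.im ^ 2) * (1 + lam * r) ^ 2 =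
        (r ^ 2 + lam ^ 2 - 2 * lam * z.re) * (1 + lam * r) ^ 2 := by
      linear_combination (1 + lam * r) ^ 2 * habz
    have e2 : (r + lam) ^ 2 * ((1 - lam * z.re) ^ 2 + (lam * z.im) ^ 2) =
        (r + lam) ^ 2 * (1 + lam ^ 2 * r ^ 2 - 2 * lam * z.re) := by
      linear_combination (r + lam) ^ 2 * lam ^ 2 * habz
    rw [e1, e2]
    nlinarith [mul_nonneg (mul_nonneg hl0.le (by linarith : (0:ℝ) ≤ z.re + r))
      (mul_nonneg (mul_nonneg (by nlinarith : (0:ℝ) ≤ (1+r)*(1+lam)) (by linarith : (0:ℝ) ≤ 1-r))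
        (by linarith : (0:ℝ) ≤ 1-lam))]
  have h3 : (0:ℝ) ≤ ‖z - (lam : ℂ)‖ * (1 + lam * r) := by positivity
  have h4 : (0:ℝ) ≤ (r + lam) * ‖1 - (lam : ℂ) * z‖ := by positivity
  nlinarith [key]

lemma blaschke_bound_large (lam r : ℝ) (hl0 : 0 < lam) (hl1 : lam < 1)
    (hr1 : 1 ≤ r) (hrl : lam * r < 1) (z : ℂ) (hz : ‖z‖ = r) :
    ‖(z - (lam : ℂ)) / (1 - (lam : ℂ) * z)‖ ≤ (r - lam) / (1 - lam * r) := by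
  obtain ⟨h1, h2⟩ := norm_sq_expand lam z
  have habz := norm_sq_circle r z hz
  have hr0 : (0:ℝ) < r := by linarith
  have hare : z.re ≤ r := by nlinarith [sq_nonneg z.im, sq_nonneg (z.re - r)]
  have hden : (0:ℝ) < ‖1 - (lam : ℂ) * z‖ := by
    have : 1 - lam * r ≤ ‖1 - (lam : ℂ) * z‖ := by
      calc 1 - lam * r = ‖(1:ℂ)‖ - ‖(lam : ℂ) * z‖ := by
            rw [norm_mul, Complex.norm_real, Real.norm_of_nonneg hl0.le, hz]; simp
        _ ≤ ‖1 - (lam : ℂ) * z‖ := norm_sub_norm_le _ _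
    nlinarith
  rw [norm_div, div_le_div_iff₀ hden (by nlinarith)]
  have key : (‖z - (lam : ℂ)‖ * (1 - lam * r)) ^ 2 ≤ ((r - lam) * ‖1 - (lam : ℂ) * z‖) ^ 2 := by
    rw [mul_pow, mul_pow, h1, h2]
    have e1 : ((z.re - lam) ^ 2 + z.im ^ 2) * (1 - lam * r) ^ 2 =
        (r ^ 2 + lam ^ 2 - 2 * lam * z.re) * (1 - lam * r) ^ 2 := by
      linear_combination (1 - lam * r) ^ 2 * habz
    have e2 : (r - lam) ^ 2 * ((1 - lam * z.re) ^ 2 + (lam * z.im) ^ 2) =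
        (r - lam) ^ 2 * (1 + lam ^ 2 * r ^ 2 - 2 * lam * z.re) := by
      linear_combination (r - lam) ^ 2 * lam ^ 2 * habz
    rw [e1, e2]
    nlinarith [mul_nonneg (mul_nonneg hl0.le (by linarith : (0:ℝ) ≤ r - z.re))
      (mul_nonneg (mul_nonneg (by nlinarith : (0:ℝ) ≤ (1+r)*(1-lam)) (by linarith : (0:ℝ) ≤ r-1))
        (by linarith : (0:ℝ) ≤ 1+lam))]
  have h3 : (0:ℝ) ≤ ‖z - (lam : ℂ)‖ * (1 - lam * r) := by
    have := norm_nonneg (z - (lam:ℂ)); nlinarith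
  have h4 : (0:ℝ) ≤ (r - lam) * ‖1 - (lam : ℂ) * z‖ := by
    have hlr : lam ≤ r := by nlinarith
    nlinarith
  nlinarith [key]

lemma small_radius (alpha0 alpha : ℝ) (ha0 : 0 < alpha) (haa : alpha < alpha0)
    (ha01 : alpha0 < 1) :
    ∃ r : ℝ, 0 < r ∧ r < 1 ∧ 1 - alpha0 * ((alpha0 - alpha)/(2*alpha0)) ≤ r ^ alpha ∧
      r = 1 - (alpha0 - alpha)/(2*alpha0) := by
  set ε := (alpha0 - alpha)/(2*alpha0) with hε
  have ha00 : 0 < alpha0 := lt_trans ha0 haa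
  have hε0 : 0 < ε := by rw [hε]; exact div_pos (by linarith) (by linarith)
  have hε12 : ε < 1/2 := by
    rw [hε, div_lt_div_iff₀ (by linarith) (by norm_num)]
    nlinarith
  set r := 1 - ε with hr
  have hr0 : 0 < r := by rw [hr]; linarith
  have hr1 : r < 1 := by rw [hr]; linarith
  refine ⟨r, hr0, hr1, ?_, rfl⟩
  have hae : 0 < alpha0 * ε := mul_pos ha00 hε0
  have hae1 : alpha0 * ε < 1/2 := by nlinarith
  have hx0 : 0 < 1 - alpha0 * ε := by linarith
  set X := 1 + (1/alpha) * (alpha0 * ε) with hX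
  have hXpos : 0 < X := by
    have h := mul_nonneg (le_of_lt (by positivity : (0:ℝ) < 1/alpha)) hae.le
    rw [hX]; linarith
  have e2 : alpha0 * (1 - ε) - alpha = (alpha0 - alpha)/2 := by
    rw [hε]; field_simp; ring
  have hrX : 1 ≤ r * X := by
    have key : alpha * ((1 - ε) * X - 1) = ε * (alpha0 * (1 - ε) - alpha) := by
      rw [hX]; field_simp; ring
    have hpos : 0 < ε * (alpha0 * (1 - ε) - alpha) := by
      rw [e2]; exact mul_pos hε0 (by linarith)
    rw [hr]
    nlinarith [key, hpos, ha0]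
  have hb1 : X⁻¹ ≤ r := by
    calc X⁻¹ = X⁻¹ * 1 := by ring
      _ ≤ X⁻¹ * (r * X) := mul_le_mul_of_nonneg_left hrX (inv_pos.mpr hXpos).le
      _ = r := by field_simp
  have c1 : (1 - alpha0 * ε) ≤ (1 + alpha0 * ε)⁻¹ := by
    have h1t : (0:ℝ) < 1 + alpha0 * ε := by linarith
    have hm : (1 - alpha0 * ε) * (1 + alpha0 * ε) ≤ 1 := by nlinarith
    calc (1 - alpha0 * ε) = ((1 - alpha0 * ε) * (1 + alpha0 * ε)) * (1 + alpha0 * ε)⁻¹ := by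
          field_simp
      _ ≤ 1 * (1 + alpha0 * ε)⁻¹ := mul_le_mul_of_nonneg_right hm (inv_pos.mpr h1t).le
      _ = (1 + alpha0 * ε)⁻¹ := one_mul _
  have c2 : (1 - alpha0 * ε) ^ (1/alpha) ≤ ((1 + alpha0 * ε)⁻¹) ^ (1/alpha) :=
    Real.rpow_le_rpow hx0.le c1 (by positivity)
  have c3 : ((1 + alpha0 * ε)⁻¹) ^ (1/alpha) = ((1 + alpha0 * ε) ^ (1/alpha))⁻¹ :=
    Real.inv_rpow (by linarith) _
  have c4 : X ≤ (1 + alpha0 * ε) ^ (1/alpha) :=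
    one_add_mul_self_le_rpow_one_add (by linarith) (by
      rw [le_div_iff₀ ha0]; linarith)
  have c5 : ((1 + alpha0 * ε) ^ (1/alpha))⁻¹ ≤ X⁻¹ :=
    inv_anti₀ hXpos c4
  have hfin : (1 - alpha0 * ε) ^ (1/alpha) ≤ r := by
    calc (1 - alpha0 * ε) ^ (1/alpha) ≤ ((1 + alpha0 * ε)⁻¹) ^ (1/alpha) := c2
      _ = ((1 + alpha0 * ε) ^ (1/alpha))⁻¹ := c3
      _ ≤ X⁻¹ := c5
      _ ≤ r := hb1
  have hmon : ((1 - alpha0 * ε) ^ (1/alpha)) ^ alpha ≤ r ^ alpha :=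
    Real.rpow_le_rpow (Real.rpow_nonneg hx0.le _) hfin ha0.le
  rwa [← Real.rpow_mul hx0.le, one_div_mul_cancel ha0.ne', Real.rpow_one] at hmon

lemma large_radius (lam alpha0 alpha : ℝ) (hl0 : 0 < lam) (hl1 : lam < 1)
    (halpha0 : alpha0 = (1 - lam) / (1 + lam)) (ha0 : 0 < alpha) (haa : alpha < alpha0) :
    ∃ r : ℝ, 1 < r ∧ lam * r < 1 ∧ (r - lam) / (1 - lam * r) < r ^ (1/alpha) := by
  have haa' : alpha * (1 + lam) < 1 - lam := by
    rw [halpha0, lt_div_iff₀ (by linarith)] at haa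
    linarith
  have hAB : alpha * (1 - lam^2) < (1 - lam)^2 := by nlinarith
  set δ := ((1 - lam)^2 - alpha * (1 - lam^2)) / (4 * lam * (1 - lam)) with hδ
  have hden : (0:ℝ) < 4 * lam * (1 - lam) := by nlinarith
  have hδ0 : 0 < δ := by
    rw [hδ]; exact div_pos (by linarith) hden
  have e : lam * δ * (4 * (1 - lam)) = (1 - lam)^2 - alpha * (1 - lam^2) := by
    rw [hδ]
    field_simp [hl0.ne', (by linarith : (1:ℝ) - lam ≠ 0)]
  have hB0 : 0 < alpha * (1 - lam^2) := mul_pos ha0 (by nlinarith)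
  have hld : lam * δ ≤ (1 - lam)/4 := by nlinarith
  set r := 1 + δ with hr
  have hr1 : 1 < r := by rw [hr]; linarith
  have hlr : lam * r < 1 := by rw [hr]; nlinarith
  have hu : (3/4) * (1 - lam) ≤ 1 - lam * r := by rw [hr]; nlinarith
  have hu0 : 0 < 1 - lam * r := by linarith
  have hD : alpha * (1 - lam^2) < (1 - lam * r)^2 := by
    rw [hr]; nlinarith [e, sq_nonneg (lam * δ)]
  have h1 : (r - lam) * (1 - lam * r) ≤ (1 - lam * r)^2 + (1 - lam^2) * δ := by
    rw [hr]; nlinarith [mul_nonneg (mul_pos hl0 hδ0).le (by nlinarith : (0:ℝ) ≤ lam * δ + δ)]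
  have hfrac : (1 - lam^2) * δ < (1/alpha) * δ * (1 - lam * r)^2 := by
    rw [div_mul_eq_mul_div, div_mul_eq_mul_div, lt_div_iff₀ ha0]
    nlinarith [mul_pos hδ0 (sub_pos.mpr hD)]
  have hstep : (r - lam) < (1 + (1/alpha) * δ) * (1 - lam * r) := by
    rw [← mul_lt_mul_iff_of_pos_right hu0]
    calc (r - lam) * (1 - lam * r) ≤ (1 - lam * r)^2 + (1 - lam^2) * δ := h1
      _ < (1 - lam * r)^2 + (1/alpha) * δ * (1 - lam * r)^2 := by linarith
      _ = (1 + (1/alpha) * δ) * (1 - lam * r) * (1 - lam * r) := by ring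
  have hbern : 1 + (1/alpha) * δ ≤ r ^ (1/alpha) := by
    rw [hr]
    exact one_add_mul_self_le_rpow_one_add (by linarith) (by
      rw [le_div_iff₀ ha0]
      have := lt_trans haa (by rw [halpha0, div_lt_one (by linarith)]; linarith : alpha0 < 1)
      linarith)
  refine ⟨r, hr1, hlr, ?_⟩
  rw [div_lt_iff₀ hu0]
  calc r - lam < (1 + (1/alpha) * δ) * (1 - lam * r) := hstep
    _ ≤ r ^ (1/alpha) * (1 - lam * r) := mul_le_mul_of_nonneg_right hbern hu0.le

set_option maxHeartbeats 1000000 in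
/-- For λ ∈ (0,1), α₀ = (1−λ)/(1+λ) and fixed α ∈ (0,α₀), the Taylor
coefficients c_{n,k} of F_n(z) = (1−z²)·((z−λ)/(1−λz))ⁿ decay exponentially in n, uniformly
over k ≤ αn and k ≥ n/α. -/
theorem coeff_exponential_decay_outside_range
    (lam : ℝ) (hlam : lam ∈ Set.Ioo (0 : ℝ) 1)
    (alpha0 : ℝ) (halpha0 : alpha0 = (1 - lam) / (1 + lam))
    (alpha : ℝ) (halpha : alpha ∈ Set.Ioo (0 : ℝ) alpha0)
    (c : ℕ → ℕ → ℂ)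
    (hc : ∀ n : ℕ, 1 ≤ n → ∀ z : ℂ, ‖z‖ < 1 →
      Summable (fun k : ℕ => c n k * z ^ k) ∧
      ∑' k : ℕ, c n k * z ^ k =
        (1 - z ^ 2) * ((z - (lam : ℂ)) / (1 - (lam : ℂ) * z)) ^ n) :
    ∃ M : ℝ, 0 < M ∧ ∃ q : ℝ, 0 < q ∧ q < 1 ∧ ∃ N : ℕ, ∀ n : ℕ, N ≤ n → ∀ k : ℕ,
      ((k : ℝ) ≤ alpha * n ∨ (n : ℝ) / alpha ≤ (k : ℝ)) →
      ‖c n k‖ ≤ M * q ^ n := by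
  obtain ⟨hl0, hl1⟩ := hlam
  obtain ⟨ha0, haa⟩ := halpha
  have ha00 : 0 < alpha0 := by rw [halpha0]; exact div_pos (by linarith) (by linarith)
  have ha01 : alpha0 < 1 := by rw [halpha0, div_lt_one (by linarith)]; linarith
  obtain ⟨r1, hr10, hr11, hr1a, hr1e⟩ := small_radius alpha0 alpha ha0 haa ha01
  set ε := (alpha0 - alpha)/(2*alpha0) with hε
  have hε0 : 0 < ε := by rw [hε]; exact div_pos (by linarith) (by linarith)
  clear_value ε
  set ρ1 := (r1 + lam)/(1 + lam * r1) with hρ1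
  clear_value ρ1
  have hd1 : (0:ℝ) < 1 + lam * r1 := by nlinarith
  have hρ10 : 0 < ρ1 := by rw [hρ1]; exact div_pos (by linarith) hd1
  have hρ1lt : ρ1 < 1 - alpha0 * ε := by
    have hA : alpha0 * (1 + lam) = 1 - lam := by
      rw [halpha0]; field_simp
    have key : ((1 - alpha0 * ε) * (1 + lam * (1 - ε)) - ((1 - ε) + lam)) * (1 + lam) =
        lam * (1 - lam) * ε^2 := by
      linear_combination (-(ε * (1 + lam * (1 - ε)))) * hA
    have hkpos : 0 < lam * (1 - lam) * ε^2 :=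
      mul_pos (mul_pos hl0 (by linarith)) (pow_pos hε0 2)
    rw [hρ1, div_lt_iff₀ hd1, hr1e]
    nlinarith [key, hkpos, (by linarith : (0:ℝ) < 1 + lam)]
  have hρr : ρ1 < r1 ^ alpha := lt_of_lt_of_le hρ1lt hr1a
  have hr1apos : (0:ℝ) < r1 ^ alpha := Real.rpow_pos_of_pos hr10 _
  set q1 := ρ1 / r1 ^ alpha with hq1
  clear_value q1
  have hq10 : 0 < q1 := by rw [hq1]; exact div_pos hρ10 hr1apos
  have hq11 : q1 < 1 := by rw [hq1]; exact (div_lt_one hr1apos).mpr hρr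
  obtain ⟨r2, hr21, hr2l, hρ2lt⟩ := large_radius lam alpha0 alpha hl0 hl1 halpha0 ha0 haa
  have hu0 : (0:ℝ) < 1 - lam * r2 := by linarith
  set ρ2 := (r2 - lam)/(1 - lam * r2) with hρ2
  clear_value ρ2
  have hρ20 : 0 ≤ ρ2 := by rw [hρ2]; exact div_nonneg (by linarith) hu0.le
  have hr2apos : (0:ℝ) < r2 ^ (1/alpha) := Real.rpow_pos_of_pos (by linarith) _
  set q2 := ρ2 / r2 ^ (1/alpha) with hq2
  clear_value q2
  have hq20 : 0 ≤ q2 := by rw [hq2]; exact div_nonneg hρ20 hr2apos.le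
  have hq21 : q2 < 1 := by rw [hq2]; exact (div_lt_one hr2apos).mpr hρ2lt
  set q := max q1 q2 with hq
  clear_value q
  have hq0 : 0 < q := by rw [hq]; exact lt_of_lt_of_le hq10 (le_max_left _ _)
  have hqlt : q < 1 := by rw [hq]; exact max_lt hq11 hq21
  set M : ℝ := (1 + r1^2) + (1 + r2^2) with hM
  clear_value M
  have hM0 : 0 < M := by rw [hM]; positivity
  refine ⟨M, hM0, q, hq0, hqlt, 1, ?_⟩
  intro n hn k hk
  have hr20 : (0:ℝ) < r2 := by linarith
  rcases hk with hk | hk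
  · -- small k
    have hB : ∀ z : ℂ, ‖z‖ = r1 →
        ‖(1 - z ^ 2) * ((z - (lam : ℂ)) / (1 - (lam : ℂ) * z)) ^ n‖ ≤ (1 + r1^2) * ρ1 ^ n := by
      intro z hz
      rw [norm_mul, norm_pow]
      have h1 : ‖1 - z ^ 2‖ ≤ 1 + r1^2 := by
        calc ‖1 - z ^ 2‖ ≤ ‖(1:ℂ)‖ + ‖z ^ 2‖ := norm_sub_le _ _
          _ = 1 + r1^2 := by rw [norm_pow, hz]; simp
      have h2 : ‖(z - (lam : ℂ)) / (1 - (lam : ℂ) * z)‖ ≤ ρ1 := by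
        rw [hρ1]; exact blaschke_bound_small lam r1 hl0 hl1 hr10 hr11.le z hz
      exact mul_le_mul h1 (pow_le_pow_left₀ (norm_nonneg _) h2 n) (by positivity) (by positivity)
    have hcb := coeff_bound lam hl0 c hc n hn r1 hr10 (by nlinarith) ((1 + r1^2) * ρ1 ^ n) hB k
    have hrk : (r1⁻¹) ^ k ≤ (((r1 ^ alpha) ^ n : ℝ))⁻¹ := by
      have h1 : ((r1⁻¹) ^ k : ℝ) = (r1⁻¹) ^ (k : ℝ) := (Real.rpow_natCast _ _).symm
      have hbase : (1:ℝ) ≤ r1⁻¹ := by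
        rw [le_inv_comm₀ one_pos hr10]; simpa using hr11.le
      have h2 : (r1⁻¹) ^ (k : ℝ) ≤ (r1⁻¹) ^ (alpha * n) :=
        Real.rpow_le_rpow_of_exponent_le hbase hk
      have h3 : (r1⁻¹) ^ (alpha * (n:ℝ)) = ((r1 ^ (alpha * (n:ℝ)) : ℝ))⁻¹ :=
        Real.inv_rpow hr10.le _
      have h4 : r1 ^ (alpha * (n:ℝ)) = ((r1 ^ alpha) ^ (n:ℝ) : ℝ) := Real.rpow_mul hr10.le _ _
      have h5 : ((r1 ^ alpha) ^ ((n:ℕ):ℝ) : ℝ) = (r1 ^ alpha) ^ n := Real.rpow_natCast _ n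
      rw [h1]
      calc (r1⁻¹) ^ (k : ℝ) ≤ (r1⁻¹) ^ (alpha * n) := h2
        _ = ((r1 ^ (alpha * (n:ℝ)) : ℝ))⁻¹ := h3
        _ = (((r1 ^ alpha) ^ n : ℝ))⁻¹ := by rw [h4, h5]
    calc ‖c n k‖ ≤ ((1 + r1^2) * ρ1 ^ n) * (r1⁻¹) ^ k := hcb
      _ ≤ ((1 + r1^2) * ρ1 ^ n) * (((r1 ^ alpha) ^ n : ℝ))⁻¹ :=
          mul_le_mul_of_nonneg_left hrk (by positivity)
      _ = (1 + r1^2) * q1 ^ n := by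
          rw [hq1, div_pow, div_eq_mul_inv]; ring
      _ ≤ M * q ^ n := by
          have hqq : q1 ^ n ≤ q ^ n :=
            pow_le_pow_left₀ hq10.le (by rw [hq]; exact le_max_left _ _) n
          have hMM : (1 + r1^2) ≤ M := by rw [hM]; nlinarith [sq_nonneg r2]
          exact mul_le_mul hMM hqq (pow_nonneg hq10.le n) hM0.le
  · -- large k
    have hB : ∀ z : ℂ, ‖z‖ = r2 →
        ‖(1 - z ^ 2) * ((z - (lam : ℂ)) / (1 - (lam : ℂ) * z)) ^ n‖ ≤ (1 + r2^2) * ρ2 ^ n := by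
      intro z hz
      rw [norm_mul, norm_pow]
      have h1 : ‖1 - z ^ 2‖ ≤ 1 + r2^2 := by
        calc ‖1 - z ^ 2‖ ≤ ‖(1:ℂ)‖ + ‖z ^ 2‖ := norm_sub_le _ _
          _ = 1 + r2^2 := by rw [norm_pow, hz]; simp
      have h2 : ‖(z - (lam : ℂ)) / (1 - (lam : ℂ) * z)‖ ≤ ρ2 := by
        rw [hρ2]; exact blaschke_bound_large lam r2 hl0 hl1 hr21.le (by linarith) z hz
      exact mul_le_mul h1 (pow_le_pow_left₀ (norm_nonneg _) h2 n) (by positivity) (by positivity)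
    have hcb := coeff_bound lam hl0 c hc n hn r2 hr20 (by nlinarith) ((1 + r2^2) * ρ2 ^ n) hB k
    have hrk : (r2⁻¹) ^ k ≤ (((r2 ^ (1/alpha)) ^ n : ℝ))⁻¹ := by
      have h1 : ((r2⁻¹) ^ k : ℝ) = (r2⁻¹) ^ (k : ℝ) := (Real.rpow_natCast _ _).symm
      have hbase0 : (0:ℝ) < r2⁻¹ := by positivity
      have hbase1 : r2⁻¹ ≤ 1 := by
        rw [inv_le_comm₀ hr20 one_pos]; simpa using hr21.le
      have h2 : (r2⁻¹) ^ (k : ℝ) ≤ (r2⁻¹) ^ ((n:ℝ)/alpha) :=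
        Real.rpow_le_rpow_of_exponent_ge hbase0 hbase1 hk
      have h3 : ((n:ℝ)/alpha) = (1/alpha) * (n:ℝ) := by ring
      have h4 : (r2⁻¹) ^ ((1/alpha) * (n:ℝ)) = ((r2 ^ ((1/alpha) * (n:ℝ)) : ℝ))⁻¹ :=
        Real.inv_rpow hr20.le _
      have h5 : r2 ^ ((1/alpha) * (n:ℝ)) = ((r2 ^ (1/alpha)) ^ (n:ℝ) : ℝ) :=
        Real.rpow_mul hr20.le _ _
      have h6 : ((r2 ^ (1/alpha)) ^ ((n:ℕ):ℝ) : ℝ) = (r2 ^ (1/alpha)) ^ n :=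
        Real.rpow_natCast _ n
      rw [h1]
      calc (r2⁻¹) ^ (k : ℝ) ≤ (r2⁻¹) ^ ((n:ℝ)/alpha) := h2
        _ = (r2⁻¹) ^ ((1/alpha) * (n:ℝ)) := by rw [h3]
        _ = ((r2 ^ ((1/alpha) * (n:ℝ)) : ℝ))⁻¹ := h4
        _ = (((r2 ^ (1/alpha)) ^ n : ℝ))⁻¹ := by rw [h5, h6]
    calc ‖c n k‖ ≤ ((1 + r2^2) * ρ2 ^ n) * (r2⁻¹) ^ k := hcb
      _ ≤ ((1 + r2^2) * ρ2 ^ n) * (((r2 ^ (1/alpha)) ^ n : ℝ))⁻¹ :=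
          mul_le_mul_of_nonneg_left hrk (by positivity)
      _ = (1 + r2^2) * q2 ^ n := by
          rw [hq2, div_pow, div_eq_mul_inv]; ring
      _ ≤ M * q ^ n := by
          have hqq : q2 ^ n ≤ q ^ n :=
            pow_le_pow_left₀ hq20 (by rw [hq]; exact le_max_right _ _) n
          have hMM : (1 + r2^2) ≤ M := by rw [hM]; nlinarith [sq_nonneg r1]
          exact mul_le_mul hMM hqq (pow_nonneg hq20 n) hM0.le
end

section
/- Fix λ ∈ (0,1), set α₀ = (1−λ)/(1+λ), let a > 0, and put u = (a(1+λ²) − (1−λ²))/(2λa). Consider the rational function F_a(z) = a/z − 1/(z−λ) − λ/(1−λz) on ℂ∖{0, λ, λ^{−1}}. Then: (0) for z ∈ ℂ∖{0, λ, λ^{−1}}, F_a(z) = 0 if and only if z² − 2uz + 1 = 0; (1) if α₀ < a < α₀^{−1}, the two roots z₊, z₋ of z² − 2uz + 1 are distinct, lie on the unit circle, satisfy z₋ = conj(z₊), and F_a′(z₊) ≠ 0 and F_a′(z₋) ≠ 0; (2) if a = α₀ (respectively a = α₀^{−1}), the quadratic has the double root z₀ = −1 (respectively z₀ = 1), and F_a(z₀)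 = F_a′(z₀) = 0 while F_a″(z₀) ≠ 0; (3) if a ∉ [α₀, α₀^{−1}], the two roots are real, satisfy z₋ = 1/z₊, and F_a′(z₊) ≠ 0 and F_a′(z₋) ≠ 0. -/
set_option maxHeartbeats 1600000

lemma aux_hasDerivAt1 (a : ℝ) (L z : ℂ) (hz : z ≠ 0) (h1 : z - L ≠ 0) (h2 : 1 - L*z ≠ 0) :
    HasDerivAt (fun y : ℂ => (a:ℂ)/y - 1/(y - L) - L/(1 - L*y))
      (-(a:ℂ)/z^2 + 1/(z-L)^2 - L^2/(1-L*z)^2) z := by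
  have d1 := (hasDerivAt_const z (a:ℂ)).div (hasDerivAt_id z) hz
  have d2 := (hasDerivAt_const z (1:ℂ)).div ((hasDerivAt_id z).sub_const L) h1
  have d3 := (hasDerivAt_const z (L:ℂ)).div
    (((hasDerivAt_id z).const_mul L).const_sub 1) h2
  have := (d1.sub d2).sub d3
  refine this.congr_deriv ?_
  simp only [id_eq]
  field_simp
  ring

lemma aux_hasDerivAt2 (a : ℝ) (L z : ℂ) (hz : z ≠ 0) (h1 : z - L ≠ 0) (h2 : 1 - L*z ≠ 0) :
    HasDerivAt (fun y : ℂ => -(a:ℂ)/y^2 + 1/(y - L)^2 - L^2/(1 - L*y)^2)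
      (2*(a:ℂ)/z^3 - 2/(z-L)^3 - 2*L^3/(1-L*z)^3) z := by
  have d1 := (hasDerivAt_const z (-(a:ℂ))).div ((hasDerivAt_id z).pow 2) (pow_ne_zero 2 hz)
  have d2 := (hasDerivAt_const z (1:ℂ)).div (((hasDerivAt_id z).sub_const L).pow 2) (pow_ne_zero 2 h1)
  have d3 := (hasDerivAt_const z ((L:ℂ)^2)).div
    ((((hasDerivAt_id z).const_mul L).const_sub 1).pow 2) (pow_ne_zero 2 h2)
  have := (d1.add d2).sub d3
  refine this.congr_deriv ?_
  simp only [id_eq]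
  norm_num
  field_simp
  ring

/-- Stationary points of f_a(z) = log(zᵃ(1−λz)/(z−λ)).  With
F_a(z) = a/z − 1/(z−λ) − λ/(1−λz) and u = (a(1+λ²)−(1−λ²))/(2λa):
(0) F_a(z) = 0 iff z² − 2uz + 1 = 0 (for z ∉ {0, λ, λ⁻¹});
(1) for α₀ < a < α₀⁻¹ the quadratic has two distinct unimodular conjugate roots, both
    simple stationary points of f_a;
(2) for a = α₀ (resp. a = α₀⁻¹) it has the double root −1 (resp. 1), where F_a and F_a′
    vanish but F_a″ does not;
(3) for a ∉ [α₀, α₀⁻¹] it has two distinct real roots with z₋ = 1/z₊, both simple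
    stationary points of f_a. -/
theorem stationary_points_of_phase_function
    (lam a : ℝ) (hlam : lam ∈ Set.Ioo (0 : ℝ) 1) (ha : 0 < a)
    (alpha0 : ℝ) (halpha0 : alpha0 = (1 - lam) / (1 + lam))
    (u : ℝ) (hu : u = (a * (1 + lam ^ 2) - (1 - lam ^ 2)) / (2 * lam * a))
    (F : ℂ → ℂ)
    (hF : ∀ z : ℂ, F z = (a : ℂ) / z - 1 / (z - (lam : ℂ)) - (lam : ℂ) / (1 - (lam : ℂ) * z)) :
    (∀ z : ℂ, z ≠ 0 → z ≠ (lam : ℂ) → z ≠ ((lam : ℂ))⁻¹ →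
      (F z = 0 ↔ z ^ 2 - 2 * (u : ℂ) * z + 1 = 0)) ∧
    (alpha0 < a → a < alpha0⁻¹ →
      ∃ zp zm : ℂ, zp ≠ zm ∧
        zp ^ 2 - 2 * (u : ℂ) * zp + 1 = 0 ∧ zm ^ 2 - 2 * (u : ℂ) * zm + 1 = 0 ∧
        (∀ z : ℂ, z ^ 2 - 2 * (u : ℂ) * z + 1 = 0 → z = zp ∨ z = zm) ∧
        ‖zp‖ = 1 ∧ ‖zm‖ = 1 ∧ zm = (starRingEnd ℂ) zp ∧
        deriv F zp ≠ 0 ∧ deriv F zm ≠ 0) ∧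
    (a = alpha0 →
      (∀ z : ℂ, z ^ 2 - 2 * (u : ℂ) * z + 1 = (z + 1) ^ 2) ∧
      F (-1) = 0 ∧ deriv F (-1) = 0 ∧ deriv (deriv F) (-1) ≠ 0) ∧
    (a = alpha0⁻¹ →
      (∀ z : ℂ, z ^ 2 - 2 * (u : ℂ) * z + 1 = (z - 1) ^ 2) ∧
      F 1 = 0 ∧ deriv F 1 = 0 ∧ deriv (deriv F) 1 ≠ 0) ∧
    (a ∉ Set.Icc alpha0 alpha0⁻¹ →
      ∃ zp zm : ℂ, zp ≠ zm ∧
        zp ^ 2 - 2 * (u : ℂ) * zp + 1 = 0 ∧ zm ^ 2 - 2 * (u : ℂ) * zm + 1 = 0 ∧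
        (∀ z : ℂ, z ^ 2 - 2 * (u : ℂ) * z + 1 = 0 → z = zp ∨ z = zm) ∧
        zp.im = 0 ∧ zm.im = 0 ∧ zm = zp⁻¹ ∧
        deriv F zp ≠ 0 ∧ deriv F zm ≠ 0) := by
  obtain ⟨hl0, hl1⟩ := hlam
  have h1p : (0:ℝ) < 1 + lam := by linarith
  have h1m : (0:ℝ) < 1 - lam := by linarith
  have haC : (a:ℂ) ≠ 0 := by exact_mod_cast ha.ne'
  have hLC : (lam:ℂ) ≠ 0 := by exact_mod_cast hl0.ne'
  have h2la : (2:ℝ) * lam * a ≠ 0 := by positivity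
  have h2lapos : (0:ℝ) < 2*lam*a := by positivity
  have huC : (u:ℂ) = ((a:ℂ)*(1+(lam:ℂ)^2) - (1-(lam:ℂ)^2))/(2*(lam:ℂ)*(a:ℂ)) := by
    rw [hu]; push_cast; ring
  have hu2 : 2*lam*a*u = a*(1+lam^2) - (1-lam^2) := by
    rw [hu]; field_simp
  have key1 : 2*lam*a*(u+1) = (1+lam)*(a*(1+lam)-(1-lam)) := by linear_combination hu2
  have key2 : 2*lam*a*(u-1) = (1-lam)*(a*(1-lam)-(1+lam)) := by linear_combination hu2
  have hne : -(a:ℂ)*(lam:ℂ) ≠ 0 := by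
    simp only [neg_mul, ne_eq, neg_eq_zero]; exact mul_ne_zero haC hLC
  have hinv : ∀ z : ℂ, z ≠ ((lam:ℂ))⁻¹ → 1 - (lam:ℂ)*z ≠ 0 := by
    intro z hz h
    have h1 : (lam:ℂ)*z = 1 := by linear_combination -h
    exact hz (eq_inv_of_mul_eq_one_left (by rw [mul_comm]; exact h1))
  have part0 : ∀ z : ℂ, z ≠ 0 → z ≠ (lam : ℂ) → z ≠ ((lam : ℂ))⁻¹ →
      (F z = 0 ↔ z ^ 2 - 2 * (u : ℂ) * z + 1 = 0) := by
    intro z hz0 hzL hzLi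
    have hzL' : z - (lam:ℂ) ≠ 0 := sub_ne_zero.mpr hzL
    have hLz : 1 - (lam:ℂ)*z ≠ 0 := hinv z hzLi
    have hD : z*(z-(lam:ℂ))*(1-(lam:ℂ)*z) ≠ 0 := mul_ne_zero (mul_ne_zero hz0 hzL') hLz
    have hkey : F z = ((-(a:ℂ)*(lam:ℂ)) * (z^2 - 2*(u:ℂ)*z + 1))/(z*(z-(lam:ℂ))*(1-(lam:ℂ)*z)) := by
      have hLz'' : 1 - z*(lam:ℂ) ≠ 0 := by rwa [mul_comm]
      rw [hF z, huC]; field_simp; ring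
    rw [hkey, div_eq_zero_iff, or_iff_left hD, mul_eq_zero, or_iff_right hne]
  have hquadlam : lam^2 - 2*u*lam + 1 ≠ 0 := by
    intro hre
    have h0 : (1:ℝ) - lam^2 = 0 := by linear_combination a*hre + hu2
    nlinarith
  have derivkey : ∀ z : ℂ, z^2 - 2*(u:ℂ)*z + 1 = 0 → z ≠ (u:ℂ) → deriv F z ≠ 0 := by
    intro z hroot hzu
    have hz0 : z ≠ 0 := by
      intro h; rw [h] at hroot; norm_num at hroot
    have hzL' : z - (lam:ℂ) ≠ 0 := by
      intro h
      have hz : z = (lam:ℂ) := sub_eq_zero.mp h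
      rw [hz] at hroot
      have hre : lam^2 - 2*u*lam + 1 = 0 := by exact_mod_cast hroot
      exact hquadlam hre
    have hLz : 1 - (lam:ℂ)*z ≠ 0 := by
      intro h
      have hlz : (lam:ℂ)*z = 1 := by linear_combination -h
      have hC : (lam:ℂ)^2 - 2*(u:ℂ)*(lam:ℂ) + 1 = 0 := by
        linear_combination ((lam:ℂ))^2*hroot + (2*(u:ℂ)*(lam:ℂ) - (lam:ℂ)*z - 1)*hlz
      have hre : lam^2 - 2*u*lam + 1 = 0 := by exact_mod_cast hC
      exact hquadlam hre
    have hD : z*(z-(lam:ℂ))*(1-(lam:ℂ)*z) ≠ 0 := mul_ne_zero (mul_ne_zero hz0 hzL') hLz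
    have hd := aux_hasDerivAt1 a (lam:ℂ) z hz0 hzL' hLz
    have hdF : deriv F z = -(a:ℂ)/z^2 + 1/(z-(lam:ℂ))^2 - (lam:ℂ)^2/(1-(lam:ℂ)*z)^2 := by
      rw [funext hF]; exact hd.deriv
    have hid : (-(a:ℂ)/z^2 + 1/(z-(lam:ℂ))^2 - (lam:ℂ)^2/(1-(lam:ℂ)*z)^2) * (z*(z-(lam:ℂ))*(1-(lam:ℂ)*z))^2
        = (-(a:ℂ)*(lam:ℂ)*(2*z-2*(u:ℂ))) * (z*(z-(lam:ℂ))*(1-(lam:ℂ)*z))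
          + ((a:ℂ)*(lam:ℂ)*(2*z - 3*(lam:ℂ)*z^2 - (lam:ℂ) + 2*(lam:ℂ)^2*z)) * (z^2 - 2*(u:ℂ)*z + 1) := by
      have hLz'' : 1 - z*(lam:ℂ) ≠ 0 := by rwa [mul_comm]
      rw [huC]; field_simp; ring
    rw [hroot, mul_zero, add_zero] at hid
    rw [hdF]
    intro hV
    rw [hV, zero_mul] at hid
    have h2 : (-(a:ℂ)*(lam:ℂ)*(2*z-2*(u:ℂ))) * (z*(z-(lam:ℂ))*(1-(lam:ℂ)*z)) = 0 := hid.symm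
    have h3 : 2*z - 2*(u:ℂ) ≠ 0 := by
      intro h; apply hzu; linear_combination h/2
    exact (mul_ne_zero (mul_ne_zero hne h3) hD) h2
  refine ⟨part0, ?_, ?_, ?_, ?_⟩
  -- Part 1
  · intro h1 h2
    rw [halpha0] at h1 h2
    rw [inv_div] at h2
    have hA : 1 - lam < a*(1+lam) := by
      rw [div_lt_iff₀ h1p] at h1; linarith
    have hB : a*(1-lam) < 1+lam := by
      rw [lt_div_iff₀ h1m] at h2; linarith
    have hum : -1 < u := by
      nlinarith [key1, mul_pos h1p (show (0:ℝ) < a*(1+lam)-(1-lam) by linarith), h2lapos]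
    have hup : u < 1 := by
      nlinarith [key2, mul_pos h1m (show (0:ℝ) < (1+lam)-a*(1-lam) by linarith), h2lapos]
    set s := Real.sqrt (1 - u^2) with hs
    have hs2 : s^2 = 1 - u^2 := Real.sq_sqrt (by nlinarith)
    have hspos : 0 < s := Real.sqrt_pos.mpr (by nlinarith)
    have hsC : (s:ℂ)^2 = 1 - (u:ℂ)^2 := by exact_mod_cast hs2
    refine ⟨(u:ℂ) + s*Complex.I, (u:ℂ) - s*Complex.I, ?_, ?_, ?_, ?_, ?_, ?_, ?_, ?_, ?_⟩
    · intro h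
      have := congrArg Complex.im h
      simp at this
      linarith
    · linear_combination (s:ℂ)^2 * Complex.I_sq - hsC
    · linear_combination (s:ℂ)^2 * Complex.I_sq - hsC
    · intro z hz
      have hfac : (z - ((u:ℂ) + s*Complex.I)) * (z - ((u:ℂ) - s*Complex.I)) = 0 := by
        linear_combination hz - (s:ℂ)^2 * Complex.I_sq + hsC
      rcases mul_eq_zero.mp hfac with h | h
      · exact Or.inl (sub_eq_zero.mp h)
      · exact Or.inr (sub_eq_zero.mp h)
    · have hn : ‖(u:ℂ) + s*Complex.I‖^2 = 1 := by
        rw [Complex.sq_norm, Complex.normSq_apply]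
        simp
        nlinarith
      have h1' : (‖(u:ℂ) + s*Complex.I‖ - 1) * (‖(u:ℂ) + s*Complex.I‖ + 1) = 0 := by
        linear_combination hn
      rcases mul_eq_zero.mp h1' with h | h
      · linarith [sub_eq_zero.mp h]
      · nlinarith [norm_nonneg ((u:ℂ) + s*Complex.I)]
    · have hn : ‖(u:ℂ) - s*Complex.I‖^2 = 1 := by
        rw [Complex.sq_norm, Complex.normSq_apply]
        simp
        nlinarith
      have h1' : (‖(u:ℂ) - s*Complex.I‖ - 1) * (‖(u:ℂ) - s*Complex.I‖ + 1) = 0 := by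
        linear_combination hn
      rcases mul_eq_zero.mp h1' with h | h
      · linarith [sub_eq_zero.mp h]
      · nlinarith [norm_nonneg ((u:ℂ) - s*Complex.I)]
    · apply Complex.ext <;> simp
    · apply derivkey
      · linear_combination (s:ℂ)^2 * Complex.I_sq - hsC
      · intro h
        have := congrArg Complex.im h
        simp at this
        linarith
    · apply derivkey
      · linear_combination (s:ℂ)^2 * Complex.I_sq - hsC
      · intro h
        have := congrArg Complex.im h
        simp at this
        linarith
  -- Part 2 (a = alpha0)
  · intro haa
    have hu1 : u = -1 := by
      rw [hu, haa, halpha0]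
      field_simp
      ring
    have huC1 : (u:ℂ) = -1 := by rw [hu1]; push_cast; ring
    have haC1 : (a:ℂ) = (1-(lam:ℂ))/(1+(lam:ℂ)) := by
      rw [haa, halpha0]; push_cast; ring
    have h1LC : (1:ℂ) + (lam:ℂ) ≠ 0 := by
      intro h
      have : (1:ℝ) + lam = 0 := by exact_mod_cast h
      linarith
    have h1mC : (1:ℂ) - (lam:ℂ) ≠ 0 := by
      intro h
      have : (1:ℝ) - lam = 0 := by exact_mod_cast h
      linarith
    have hm0 : (-1:ℂ) ≠ 0 := by norm_num
    have hmL : (-1:ℂ) ≠ (lam:ℂ) := by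
      intro h
      have : (-1:ℝ) = lam := by exact_mod_cast h
      linarith
    have hmLi : (-1:ℂ) ≠ ((lam:ℂ))⁻¹ := by
      rw [show ((lam:ℂ))⁻¹ = ((lam⁻¹:ℝ):ℂ) by push_cast; ring]
      intro h
      have h' : (-1:ℝ) = lam⁻¹ := by exact_mod_cast h
      have : (0:ℝ) < lam⁻¹ := by positivity
      linarith
    have hmL' : (-1:ℂ) - (lam:ℂ) ≠ 0 := sub_ne_zero.mpr hmL
    have hmLz : 1 - (lam:ℂ)*(-1) ≠ 0 := hinv _ hmLi
    have hmLz2 : (1:ℂ) - -(lam:ℂ) ≠ 0 := by rw [sub_neg_eq_add]; exact h1LC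
    refine ⟨?_, ?_, ?_, ?_⟩
    · intro z; rw [huC1]; ring
    · rw [part0 _ hm0 hmL hmLi, huC1]; ring
    · have hd := aux_hasDerivAt1 a (lam:ℂ) (-1) hm0 hmL' hmLz
      rw [funext hF, hd.deriv, haC1]
      field_simp
      ring
    · have hEv : deriv F =ᶠ[nhds (-1:ℂ)]
          (fun y : ℂ => -(a:ℂ)/y^2 + 1/(y - (lam:ℂ))^2 - (lam:ℂ)^2/(1 - (lam:ℂ)*y)^2) := by
        have e1 : ∀ᶠ (y:ℂ) in nhds (-1:ℂ), y ≠ 0 := eventually_ne_nhds hm0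
        have e2 : ∀ᶠ (y:ℂ) in nhds (-1:ℂ), y ≠ (lam:ℂ) := eventually_ne_nhds hmL
        have e3 : ∀ᶠ (y:ℂ) in nhds (-1:ℂ), y ≠ ((lam:ℂ))⁻¹ := eventually_ne_nhds hmLi
        filter_upwards [e1, e2, e3] with y hy0 hyL hyLi
        rw [funext hF]
        exact (aux_hasDerivAt1 a (lam:ℂ) y hy0 (sub_ne_zero.mpr hyL) (hinv y hyLi)).deriv
      rw [hEv.deriv_eq]
      have hd2 := aux_hasDerivAt2 a (lam:ℂ) (-1) hm0 hmL' hmLz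
      rw [hd2.deriv]
      have hval : 2*(a:ℂ)/(-1:ℂ)^3 - 2/((-1:ℂ)-(lam:ℂ))^3 - 2*(lam:ℂ)^3/(1-(lam:ℂ)*(-1))^3
          = -2*(lam:ℂ)*(1-(lam:ℂ))/(1+(lam:ℂ))^3 := by
        rw [haC1]
        field_simp
        ring
      rw [hval]
      apply div_ne_zero
      · intro h
        rcases mul_eq_zero.mp h with h' | h'
        · rcases mul_eq_zero.mp h' with h'' | h''
          · norm_num at h''
          · exact hLC h''
        · exact h1mC h'
      · exact pow_ne_zero 3 h1LC
  -- Part 2' (a = alpha0⁻¹)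
  · intro haa
    have hu1 : u = 1 := by
      rw [hu, haa, halpha0, inv_div]
      field_simp
      ring
    have huC1 : (u:ℂ) = 1 := by rw [hu1]; push_cast; ring
    have haC1 : (a:ℂ) = (1+(lam:ℂ))/(1-(lam:ℂ)) := by
      rw [haa, halpha0, inv_div]; push_cast; ring
    have h1LC : (1:ℂ) + (lam:ℂ) ≠ 0 := by
      intro h
      have : (1:ℝ) + lam = 0 := by exact_mod_cast h
      linarith
    have h1mC : (1:ℂ) - (lam:ℂ) ≠ 0 := by
      intro h
      have : (1:ℝ) - lam = 0 := by exact_mod_cast h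
      linarith
    have hm0 : (1:ℂ) ≠ 0 := by norm_num
    have hmL : (1:ℂ) ≠ (lam:ℂ) := by
      intro h
      have : (1:ℝ) = lam := by exact_mod_cast h
      linarith
    have hmLi : (1:ℂ) ≠ ((lam:ℂ))⁻¹ := by
      rw [show ((lam:ℂ))⁻¹ = ((lam⁻¹:ℝ):ℂ) by push_cast; ring]
      intro h
      have h' : (1:ℝ) = lam⁻¹ := by exact_mod_cast h
      have : 1 < lam⁻¹ := by
        rw [lt_inv_comm₀ one_pos hl0]
        simpa using hl1
      linarith
    have hmL' : (1:ℂ) - (lam:ℂ) ≠ 0 := sub_ne_zero.mpr hmL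
    have hmLz : 1 - (lam:ℂ)*(1:ℂ) ≠ 0 := hinv _ hmLi
    refine ⟨?_, ?_, ?_, ?_⟩
    · intro z; rw [huC1]; ring
    · rw [part0 _ hm0 hmL hmLi, huC1]; ring
    · have hd := aux_hasDerivAt1 a (lam:ℂ) 1 hm0 hmL' hmLz
      rw [funext hF, hd.deriv, haC1]
      field_simp
      ring
    · have hEv : deriv F =ᶠ[nhds (1:ℂ)]
          (fun y : ℂ => -(a:ℂ)/y^2 + 1/(y - (lam:ℂ))^2 - (lam:ℂ)^2/(1 - (lam:ℂ)*y)^2) := by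
        have e1 : ∀ᶠ (y:ℂ) in nhds (1:ℂ), y ≠ 0 := eventually_ne_nhds hm0
        have e2 : ∀ᶠ (y:ℂ) in nhds (1:ℂ), y ≠ (lam:ℂ) := eventually_ne_nhds hmL
        have e3 : ∀ᶠ (y:ℂ) in nhds (1:ℂ), y ≠ ((lam:ℂ))⁻¹ := eventually_ne_nhds hmLi
        filter_upwards [e1, e2, e3] with y hy0 hyL hyLi
        rw [funext hF]
        exact (aux_hasDerivAt1 a (lam:ℂ) y hy0 (sub_ne_zero.mpr hyL) (hinv y hyLi)).deriv
      rw [hEv.deriv_eq]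
      have hd2 := aux_hasDerivAt2 a (lam:ℂ) 1 hm0 hmL' hmLz
      rw [hd2.deriv]
      have hval : 2*(a:ℂ)/(1:ℂ)^3 - 2/((1:ℂ)-(lam:ℂ))^3 - 2*(lam:ℂ)^3/(1-(lam:ℂ)*(1:ℂ))^3
          = -2*(lam:ℂ)*(1+(lam:ℂ))/(1-(lam:ℂ))^3 := by
        rw [haC1]
        field_simp
        ring
      rw [hval]
      apply div_ne_zero
      · intro h
        rcases mul_eq_zero.mp h with h' | h'
        · rcases mul_eq_zero.mp h' with h'' | h''
          · norm_num at h''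
          · exact hLC h''
        · exact h1LC h'
      · exact pow_ne_zero 3 h1mC
  -- Part 3
  · intro hno
    rw [Set.mem_Icc, not_and_or, not_le, not_le] at hno
    have hu1 : 1 < u^2 := by
      rcases hno with h | h
      · rw [halpha0, lt_div_iff₀ h1p] at h
        have hA : a*(1+lam) < 1-lam := by linarith
        have hum : u + 1 < 0 := by
          nlinarith [key1, mul_pos h1p (show (0:ℝ) < (1-lam) - a*(1+lam) by linarith)]
        have h2 : u - 1 < 0 := by linarith
        nlinarith
      · rw [halpha0, inv_div, div_lt_iff₀ h1m] at h
        have hB : 1+lam < a*(1-lam) := by linarith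
        have hup : 0 < u - 1 := by
          nlinarith [key2, mul_pos h1m (show (0:ℝ) < a*(1-lam) - (1+lam) by linarith)]
        have h2 : 0 < u + 1 := by linarith
        nlinarith
    set t := Real.sqrt (u^2 - 1) with hts
    have ht2 : t^2 = u^2 - 1 := Real.sq_sqrt (by nlinarith)
    have htpos : 0 < t := Real.sqrt_pos.mpr (by nlinarith)
    have ht2C : (t:ℂ)^2 = (u:ℂ)^2 - 1 := by exact_mod_cast ht2
    refine ⟨((u+t:ℝ):ℂ), ((u-t:ℝ):ℂ), ?_, ?_, ?_, ?_, ?_, ?_, ?_, ?_, ?_⟩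
    · intro h
      have : u + t = u - t := by exact_mod_cast h
      linarith
    · push_cast
      linear_combination ht2C
    · push_cast
      linear_combination ht2C
    · intro z hz
      have hfac : (z - ((u+t:ℝ):ℂ)) * (z - ((u-t:ℝ):ℂ)) = 0 := by
        push_cast
        linear_combination hz - ht2C
      rcases mul_eq_zero.mp hfac with h | h
      · exact Or.inl (sub_eq_zero.mp h)
      · exact Or.inr (sub_eq_zero.mp h)
    · exact Complex.ofReal_im _
    · exact Complex.ofReal_im _
    · have hmul : ((u-t:ℝ):ℂ) * ((u+t:ℝ):ℂ) = 1 := by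
        push_cast
        linear_combination -ht2C
      exact eq_inv_of_mul_eq_one_left hmul
    · apply derivkey
      · push_cast; linear_combination ht2C
      · intro h
        have : u + t = u := by exact_mod_cast h
        linarith
    · apply derivkey
      · push_cast; linear_combination ht2C
      · intro h
        have : u - t = u := by exact_mod_cast h
        linarith
end

section
/- Let T be an n×n complex matrix that is power bounded by C, and let m be a polynomial with m(T) = 0. Let a be a polynomial, and suppose f and g are holomorphic on 𝔻 with absolutely summable Taylor coefficients and f(z) = a(z) + m(z)·g(z) for all z ∈ 𝔻. Then the series ∑_{k≥0} f̂(k)·T^k converges, equals a(T), and ‖a(T)‖ ≤ C · ∑_{k≥0} |f̂(k)|. (This is the Wiener-algebra instance of Nikolski's lifting inequality ‖a(T)‖ ≤ C·‖a‖_{W/BW}.) -/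
set_option maxHeartbeats 1000000
open Finset

private lemma summable_pow_mul {dc : ℕ → ℂ} (h : Summable fun k => ‖dc k‖)
    {z : ℂ} (hz : ‖z‖ < 1) : Summable fun k : ℕ => dc k * z ^ k := by
  refine Summable.of_norm_bounded h fun k => ?_
  rw [norm_mul, norm_pow]
  calc ‖dc k‖ * ‖z‖ ^ k ≤ ‖dc k‖ * 1 := by
        gcongr
        exact pow_le_one₀ (norm_nonneg z) hz.le
    _ = ‖dc k‖ := mul_one _

private lemma tsum_shift_eq {dc : ℕ → ℂ} (h : Summable fun k => ‖dc k‖)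
    {z : ℂ} (hz : ‖z‖ < 1) :
    ∑' k : ℕ, dc k * z ^ k = dc 0 + z * ∑' k : ℕ, dc (k + 1) * z ^ k := by
  rw [Summable.tsum_eq_zero_add (summable_pow_mul h hz)]
  simp only [pow_zero, mul_one]
  congr 1
  rw [← tsum_mul_left]
  congr 1; ext k; ring

private lemma shift_vanish {dc : ℕ → ℂ} (h : Summable fun k => ‖dc k‖)
    (hz : ∀ z : ℂ, ‖z‖ < 1 → ∑' k : ℕ, dc k * z ^ k = 0) :
    ∀ z : ℂ, ‖z‖ < 1 → ∑' k : ℕ, dc (k + 1) * z ^ k = 0 := by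
  have h1 : Summable fun k => ‖dc (k + 1)‖ := (summable_nat_add_iff 1).mpr h
  have h2 : Summable fun k => ‖dc (k + 2)‖ := (summable_nat_add_iff 2).mpr h
  have hd0 : dc 0 = 0 := by
    have h0 := hz 0 (by simp)
    rw [tsum_eq_single 0 (fun b hb => by simp [zero_pow hb])] at h0
    simpa using h0
  have key : ∀ z : ℂ, z ≠ 0 → ‖z‖ < 1 → ∑' k : ℕ, dc (k + 1) * z ^ k = 0 := by
    intro z hz0 hzlt
    have h0 := hz z hzlt
    rw [tsum_shift_eq h hzlt, hd0, zero_add] at h0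
    exact (mul_eq_zero.mp h0).resolve_left hz0
  have hd1 : dc 1 = 0 := by
    set M := ∑' k : ℕ, ‖dc (k + 2)‖ with hMdef
    have hbound : ∀ n : ℕ, ‖dc 1‖ ≤ (1 / ((n : ℝ) + 2)) * M := by
      intro n
      set w : ℂ := ((1 / ((n : ℝ) + 2) : ℝ) : ℂ) with hwdef
      have hpos : (0 : ℝ) < 1 / ((n : ℝ) + 2) := by positivity
      have hw0 : w ≠ 0 := by
        simp only [hwdef, ne_eq, Complex.ofReal_eq_zero]
        exact ne_of_gt hpos
      have hwnorm : ‖w‖ = 1 / ((n : ℝ) + 2) := by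
        rw [hwdef, Complex.norm_real, Real.norm_eq_abs, abs_of_pos hpos]
      have hwlt : ‖w‖ < 1 := by
        rw [hwnorm]
        rw [div_lt_one (by positivity)]
        linarith [Nat.cast_nonneg (α := ℝ) n]
      have h0 := key w hw0 hwlt
      rw [tsum_shift_eq h1 hwlt] at h0
      have heq : dc 1 = -(w * ∑' k : ℕ, dc (k + 1 + 1) * w ^ k) :=
        eq_neg_of_add_eq_zero_left h0
      rw [heq, norm_neg, norm_mul, hwnorm]
      gcongr
      calc ‖∑' k : ℕ, dc (k + 1 + 1) * w ^ k‖ ≤ ∑' k : ℕ, ‖dc (k + 1 + 1) * w ^ k‖ :=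
            norm_tsum_le_tsum_norm (by
              refine Summable.of_nonneg_of_le (fun _ => norm_nonneg _) (fun k => ?_) h2
              rw [norm_mul, norm_pow]
              calc ‖dc (k + 2)‖ * ‖w‖ ^ k ≤ ‖dc (k + 2)‖ * 1 := by
                    gcongr; exact pow_le_one₀ (norm_nonneg w) hwlt.le
                _ = ‖dc (k + 2)‖ := mul_one _)
        _ ≤ M := by
            refine Summable.tsum_le_tsum (fun k => ?_) ?_ h2
            · rw [norm_mul, norm_pow]
              calc ‖dc (k + 2)‖ * ‖w‖ ^ k ≤ ‖dc (k + 2)‖ * 1 := by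
                    gcongr; exact pow_le_one₀ (norm_nonneg w) hwlt.le
                _ = ‖dc (k + 2)‖ := mul_one _
            · refine Summable.of_nonneg_of_le (fun _ => norm_nonneg _) (fun k => ?_) h2
              rw [norm_mul, norm_pow]
              calc ‖dc (k + 2)‖ * ‖w‖ ^ k ≤ ‖dc (k + 2)‖ * 1 := by
                    gcongr; exact pow_le_one₀ (norm_nonneg w) hwlt.le
                _ = ‖dc (k + 2)‖ := mul_one _
    have htend : Filter.Tendsto (fun n : ℕ => (1 / ((n : ℝ) + 2)) * M)
        Filter.atTop (nhds 0) := by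
      have : Filter.Tendsto (fun n : ℕ => 1 / ((n : ℝ) + 2)) Filter.atTop (nhds 0) := by
        have h' := (tendsto_one_div_add_atTop_nhds_zero_nat (𝕜 := ℝ)).comp
          (Filter.tendsto_add_atTop_nat 1)
        convert h' using 2 with n
        simp [Function.comp]

        ring
      simpa using this.mul_const M
    have : ‖dc 1‖ ≤ 0 := ge_of_tendsto' htend hbound
    exact norm_le_zero_iff.mp this
  intro z hzlt
  rcases eq_or_ne z 0 with rfl | hz0
  · rw [tsum_eq_single 0 (fun b hb => by simp [zero_pow hb])]
    simpa using hd1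
  · exact key z hz0 hzlt

private lemma coeff_vanish : ∀ (j : ℕ) (dc : ℕ → ℂ), Summable (fun k => ‖dc k‖) →
    (∀ z : ℂ, ‖z‖ < 1 → ∑' k : ℕ, dc k * z ^ k = 0) → dc j = 0 := by
  intro j
  induction j with
  | zero =>
    intro dc h hz
    have h0 := hz 0 (by simp)
    rw [tsum_eq_single 0 (fun b hb => by simp [zero_pow hb])] at h0
    simpa using h0
  | succ j ih =>
    intro dc h hz
    exact ih (fun k => dc (k + 1)) ((summable_nat_add_iff 1).mpr h) (shift_vanish h hz)



/-- Wiener-algebra instance of Nikolski's lifting inequality: If T is power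
bounded by C, m(T) = 0, and f = a + m·g on 𝔻 where f, g have absolutely summable Taylor
coefficients (given by the sequences `fc`, `gc`) and a, m are polynomials, then
∑_{k≥0} f̂(k)·T^k converges to a(T) and ‖a(T)‖ ≤ C·∑_{k≥0} |f̂(k)|. -/
theorem nikolski_lifting_wiener
    {E : Type*} [NormedAddCommGroup E] [NormedSpace ℂ E] [FiniteDimensional ℂ E]
    (n : ℕ) (hn : 1 ≤ n) (hdim : Module.finrank ℂ E = n)
    (T : E →L[ℂ] E) (C : ℝ) (hC : 1 ≤ C) (hpb : ∀ j : ℕ, ‖T ^ j‖ ≤ C)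
    (m a : Polynomial ℂ) (hm : Polynomial.aeval T m = 0)
    (fc gc : ℕ → ℂ)
    (hfc : Summable fun k : ℕ => ‖fc k‖) (hgc : Summable fun k : ℕ => ‖gc k‖)
    (hrep : ∀ z : ℂ, ‖z‖ < 1 →
      ∑' k : ℕ, fc k * z ^ k = a.eval z + m.eval z * ∑' k : ℕ, gc k * z ^ k) :
    HasSum (fun k : ℕ => fc k • T ^ k) (Polynomial.aeval T a) ∧
    ‖Polynomial.aeval T a‖ ≤ C * ∑' k : ℕ, ‖fc k‖ := by
  classical
  have hC0 : (0 : ℝ) ≤ C := le_trans zero_le_one hC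
  -- coefficient sequences of the polynomials are norm-summable
  have hpolysum : ∀ p : Polynomial ℂ, Summable fun k : ℕ => ‖p.coeff k‖ := by
    intro p
    apply summable_of_ne_finset_zero (s := Finset.range (p.natDegree + 1))
    intro b hb
    simp only [Finset.mem_range, not_lt] at hb
    rw [Polynomial.coeff_eq_zero_of_natDegree_lt (lt_of_lt_of_le (Nat.lt_succ_self _) hb),
      norm_zero]
  have hma : Summable fun k : ℕ => ‖m.coeff k‖ := hpolysum m
  have haa : Summable fun k : ℕ => ‖a.coeff k‖ := hpolysum a
  -- Cauchy product coefficients of m * g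
  set hcm : ℕ → ℂ := fun n => ∑ kl ∈ Finset.HasAntidiagonal.antidiagonal n, m.coeff kl.1 * gc kl.2 with hcmdef
  have hcmnorm : Summable fun n : ℕ => ‖hcm n‖ :=
    summable_norm_sum_mul_antidiagonal_of_summable_norm hma hgc
  -- tsum of polynomial coefficient series equals evaluation
  have hpolyeval : ∀ (p : Polynomial ℂ) (z : ℂ), ∑' k : ℕ, p.coeff k * z ^ k = p.eval z := by
    intro p z
    rw [tsum_eq_sum (s := Finset.range (p.natDegree + 1)) (fun b hb => by
      simp only [Finset.mem_range, not_lt] at hb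
      rw [Polynomial.coeff_eq_zero_of_natDegree_lt (lt_of_lt_of_le (Nat.lt_succ_self _) hb),
        zero_mul]), Polynomial.eval_eq_sum_range]
  -- norm-summability of scaled series
  have hscale : ∀ (dc : ℕ → ℂ), (Summable fun k => ‖dc k‖) → ∀ z : ℂ, ‖z‖ < 1 →
      Summable fun k : ℕ => ‖dc k * z ^ k‖ := by
    intro dc h z hz
    refine Summable.of_nonneg_of_le (fun _ => norm_nonneg _) (fun k => ?_) h
    rw [norm_mul, norm_pow]
    calc ‖dc k‖ * ‖z‖ ^ k ≤ ‖dc k‖ * 1 := by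
          gcongr; exact pow_le_one₀ (norm_nonneg z) hz.le
      _ = ‖dc k‖ := mul_one _
  -- the scalar identity: fc k = a.coeff k + hcm k
  have hkey : ∀ k : ℕ, fc k = a.coeff k + hcm k := by
    have hvanish := coeff_vanish
    intro k
    have hsum_hc : Summable fun k : ℕ => ‖a.coeff k + hcm k‖ := by
      refine Summable.of_nonneg_of_le (fun _ => norm_nonneg _) (fun k => norm_add_le _ _)
        (haa.add hcmnorm)
    have hdc : Summable fun k : ℕ => ‖fc k - (a.coeff k + hcm k)‖ := by
      refine Summable.of_nonneg_of_le (fun _ => norm_nonneg _) (fun k => norm_sub_le _ _)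
        (hfc.add hsum_hc)
    have hz : ∀ z : ℂ, ‖z‖ < 1 → ∑' j : ℕ, (fc j - (a.coeff j + hcm j)) * z ^ j = 0 := by
      intro z hzlt
      have hrepz := hrep z hzlt
      -- Cauchy product on the scalar side
      have hcauchy : ∑' j : ℕ, hcm j * z ^ j = m.eval z * ∑' j : ℕ, gc j * z ^ j := by
        rw [← hpolyeval m z,
          tsum_mul_tsum_eq_tsum_sum_antidiagonal_of_summable_norm
            (hscale _ hma z hzlt) (hscale _ hgc z hzlt)]
        congr 1; ext j
        rw [hcmdef]
        rw [Finset.sum_mul]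
        refine Finset.sum_congr rfl fun kl hkl => ?_
        have := Finset.HasAntidiagonal.mem_antidiagonal.mp hkl
        rw [← this, pow_add]
        ring
      have hsplit : ∑' j : ℕ, (a.coeff j + hcm j) * z ^ j
          = a.eval z + m.eval z * ∑' j : ℕ, gc j * z ^ j := by
        have h1 : Summable fun j : ℕ => a.coeff j * z ^ j := (hscale _ haa z hzlt).of_norm
        have h2 : Summable fun j : ℕ => hcm j * z ^ j := (hscale _ hcmnorm z hzlt).of_norm
        calc ∑' j : ℕ, (a.coeff j + hcm j) * z ^ j
            = ∑' j : ℕ, (a.coeff j * z ^ j + hcm j * z ^ j) := by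
              congr 1; ext j; ring
          _ = (∑' j : ℕ, a.coeff j * z ^ j) + ∑' j : ℕ, hcm j * z ^ j := Summable.tsum_add h1 h2
          _ = a.eval z + m.eval z * ∑' j : ℕ, gc j * z ^ j := by
              rw [hpolyeval a z, hcauchy]
      have h1 : Summable fun j : ℕ => fc j * z ^ j := (hscale _ hfc z hzlt).of_norm
      have h2 : Summable fun j : ℕ => (a.coeff j + hcm j) * z ^ j :=
        (hscale _ hsum_hc z hzlt).of_norm
      calc ∑' j : ℕ, (fc j - (a.coeff j + hcm j)) * z ^ j
          = ∑' j : ℕ, (fc j * z ^ j - (a.coeff j + hcm j) * z ^ j) := by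
            congr 1; ext j; ring
        _ = (∑' j : ℕ, fc j * z ^ j) - ∑' j : ℕ, (a.coeff j + hcm j) * z ^ j := Summable.tsum_sub h1 h2
        _ = 0 := by rw [hrepz, hsplit, sub_self]
    have := hvanish k _ hdc hz
    have h' : fc k - (a.coeff k + hcm k) = 0 := this
    linear_combination h'
  -- operator side
  set u : ℕ → (E →L[ℂ] E) := fun k => m.coeff k • T ^ k with hudef
  set v : ℕ → (E →L[ℂ] E) := fun k => gc k • T ^ k with hvdef
  have hu : Summable fun k : ℕ => ‖u k‖ := by
    apply summable_of_ne_finset_zero (s := Finset.range (m.natDegree + 1))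
    intro b hb
    simp only [Finset.mem_range, not_lt] at hb
    simp [hudef, Polynomial.coeff_eq_zero_of_natDegree_lt (lt_of_lt_of_le (Nat.lt_succ_self _) hb)]
  have hsmulbound : ∀ (c : ℕ → ℂ) (k : ℕ), ‖c k • T ^ k‖ ≤ ‖c k‖ * C := by
    intro c k
    exact le_trans (norm_smul_le (c k) (T ^ k))
      (mul_le_mul_of_nonneg_left (hpb k) (norm_nonneg (c k)))
  have hv : Summable fun k : ℕ => ‖v k‖ :=
    Summable.of_nonneg_of_le (fun _ => norm_nonneg _) (fun k => hsmulbound gc k)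
      (hgc.mul_right C)
  have hpolyop : ∀ p : Polynomial ℂ,
      ∑' k : ℕ, p.coeff k • T ^ k = Polynomial.aeval T p := by
    intro p
    rw [tsum_eq_sum (s := Finset.range (p.natDegree + 1)) (fun b hb => by
      simp only [Finset.mem_range, not_lt] at hb
      rw [Polynomial.coeff_eq_zero_of_natDegree_lt (lt_of_lt_of_le (Nat.lt_succ_self _) hb),
        zero_smul]), Polynomial.aeval_eq_sum_range]
  have hsum_mT : Summable fun n : ℕ => hcm n • T ^ n :=
    Summable.of_norm (Summable.of_nonneg_of_le (fun _ => norm_nonneg _)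
      (fun k => hsmulbound hcm k) (hcmnorm.mul_right C))
  have hzero : HasSum (fun n : ℕ => hcm n • T ^ n) 0 := by
    have heq : ∑' n : ℕ, hcm n • T ^ n = 0 := by
      have hc := tsum_mul_tsum_eq_tsum_sum_antidiagonal_of_summable_norm hu hv
      have hinner : ∀ n : ℕ, ∑ kl ∈ Finset.HasAntidiagonal.antidiagonal n, u kl.1 * v kl.2 = hcm n • T ^ n := by
        intro n
        rw [hcmdef, Finset.sum_smul]
        refine Finset.sum_congr rfl fun kl hkl => ?_
        have h' := Finset.HasAntidiagonal.mem_antidiagonal.mp hkl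
        rw [hudef, hvdef]
        simp only [smul_mul_assoc, mul_smul_comm, smul_smul, ← pow_add, h']
        rw [mul_comm (gc kl.2) (m.coeff kl.1)]
      rw [funext hinner] at hc
      rw [← hc, hpolyop m, hm, zero_mul]
    have := hsum_mT.hasSum
    rwa [heq] at this
  have hA : HasSum (fun k : ℕ => a.coeff k • T ^ k) (Polynomial.aeval T a) := by
    rw [← hpolyop a]
    exact ((summable_of_ne_finset_zero (s := Finset.range (a.natDegree + 1)) (fun b hb => by
      simp only [Finset.mem_range, not_lt] at hb
      rw [Polynomial.coeff_eq_zero_of_natDegree_lt (lt_of_lt_of_le (Nat.lt_succ_self _) hb),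
        zero_smul]))).hasSum
  have hmain : HasSum (fun k : ℕ => fc k • T ^ k) (Polynomial.aeval T a) := by
    have hcomb := hA.add hzero
    rw [add_zero] at hcomb
    convert hcomb using 1
    ext k
    rw [hkey k, add_smul]
  refine ⟨hmain, ?_⟩
  have hnormsum : Summable fun k : ℕ => ‖fc k • T ^ k‖ :=
    Summable.of_nonneg_of_le (fun _ => norm_nonneg _) (fun k => hsmulbound fc k)
      (hfc.mul_right C)
  calc ‖Polynomial.aeval T a‖ = ‖∑' k : ℕ, fc k • T ^ k‖ := by rw [hmain.tsum_eq]
    _ ≤ ∑' k : ℕ, ‖fc k • T ^ k‖ := norm_tsum_le_tsum_norm hnormsum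
    _ ≤ ∑' k : ℕ, ‖fc k‖ * C := by
        exact Summable.tsum_le_tsum (fun k => hsmulbound fc k) hnormsum (hfc.mul_right C)
    _ = C * ∑' k : ℕ, ‖fc k‖ := by rw [tsum_mul_right, mul_comm]
end

section
/- Let T be an n×n complex matrix that is power bounded by C, and let m be a polynomial with m(T) = 0. Let ζ ∈ ℂ, and suppose f and g are holomorphic on 𝔻 with absolutely summable Taylor coefficients such that (ζ − z)·f(z) = 1 + m(z)·g(z) for all z ∈ 𝔻. Then the matrix ζI − T is invertible and ‖(ζI − T)⁻¹‖ ≤ C · ∑_{k≥0} |f̂(k)|. (This extends Nikolski's lifting inequality from polynomials to the rational function ψ(z) = 1/(ζ−z), by lifting the singularity of ψ through the minimal polynomial.) -/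
set_option maxHeartbeats 1000000

open Finset

private lemma coeff_unique_aux (d : ℕ → ℂ) (hd : Summable fun k => ‖d k‖)
    (h : ∀ z : ℂ, ‖z‖ < 1 → ∑' k, d k * z ^ k = 0) : ∀ k, d k = 0 := by
  set p := FormalMultilinearSeries.ofScalars ℂ d with hp
  have hcoeff : ∀ n, p.coeff n = d n := by
    intro n
    simp [FormalMultilinearSeries.coeff, hp, FormalMultilinearSeries.ofScalars, List.prod_ofFn]
  have h1 : HasFPowerSeriesAt (fun _ : ℂ => (0:ℂ)) p 0 := by
    rw [hasFPowerSeriesAt_iff]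
    filter_upwards [Metric.ball_mem_nhds (0:ℂ) one_pos] with z hz
    have hz1 : ‖z‖ < 1 := by simpa [Metric.mem_ball] using hz
    have hsum : Summable fun n : ℕ => d n * z ^ n := by
      apply Summable.of_norm
      apply hd.of_nonneg_of_le (fun n => norm_nonneg _)
      intro n
      rw [norm_mul]
      calc ‖d n‖ * ‖z ^ n‖ ≤ ‖d n‖ * 1 := by
            apply mul_le_mul_of_nonneg_left _ (norm_nonneg _)
            rw [norm_pow]
            exact pow_le_one₀ (norm_nonneg _) hz1.le
        _ = ‖d n‖ := mul_one _
    have := hsum.hasSum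
    rw [h z hz1] at this
    convert this using 2 with n
    · rfl
    · rw [hcoeff, smul_eq_mul, mul_comm]
  have h0 : HasFPowerSeriesAt (fun _ : ℂ => (0:ℂ)) (0 : FormalMultilinearSeries ℂ ℂ ℂ) 0 := by
    rw [hasFPowerSeriesAt_iff]
    filter_upwards with z
    have h00 : HasSum (fun _ : ℕ => (0:ℂ)) 0 := hasSum_zero
    convert h00 using 2 with n
    · rfl
    · rw [show FormalMultilinearSeries.coeff (0 : FormalMultilinearSeries ℂ ℂ ℂ) n = 0 from rfl, smul_zero]
  have := h1.eq_formalMultilinearSeries h0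
  intro k
  have := congrArg (fun q : FormalMultilinearSeries ℂ ℂ ℂ => q.coeff k) this
  simpa [hcoeff, show ∀ k, FormalMultilinearSeries.coeff (0 : FormalMultilinearSeries ℂ ℂ ℂ) k = 0 from fun _ => rfl] using this

private lemma summable_norm_mul_pow (c : ℕ → ℂ) (hc : Summable fun k => ‖c k‖)
    {z : ℂ} (hz : ‖z‖ ≤ 1) : Summable fun k : ℕ => ‖c k * z ^ k‖ := by
  apply hc.of_nonneg_of_le (fun k => norm_nonneg _)
  intro k
  rw [norm_mul, norm_pow]
  calc ‖c k‖ * ‖z‖ ^ k ≤ ‖c k‖ * 1 :=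
        mul_le_mul_of_nonneg_left (pow_le_one₀ (norm_nonneg _) hz) (norm_nonneg _)
    _ = ‖c k‖ := mul_one _

private lemma coeff_eq_aux (u v : ℕ → ℂ) (hu : Summable fun k => ‖u k‖)
    (hv : Summable fun k => ‖v k‖)
    (h : ∀ z : ℂ, ‖z‖ < 1 → ∑' k, u k * z ^ k = ∑' k, v k * z ^ k) : ∀ k, u k = v k := by
  have key : ∀ k, (u k - v k) = 0 := by
    apply coeff_unique_aux
    · apply Summable.of_nonneg_of_le (fun k => norm_nonneg _) (fun k => norm_sub_le _ _)
        (hu.add hv)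
    · intro z hz
      have h1 := (summable_norm_mul_pow u hu hz.le).of_norm
      have h2 := (summable_norm_mul_pow v hv hz.le).of_norm
      have : ∀ k : ℕ, (u k - v k) * z ^ k = u k * z ^ k - v k * z ^ k := fun k => by ring
      rw [tsum_congr this, Summable.tsum_sub h1 h2, h z hz, sub_self]
  intro k
  exact sub_eq_zero.mp (key k)


/-- Nikolski's lifting inequality for the rational function 1/(ζ−z): If T is
power bounded by C, m(T) = 0, and (ζ−z)·f(z) = 1 + m(z)·g(z) on 𝔻 where f, g have absolutely
summable Taylor coefficients (given by the sequences `fc`, `gc`), then ζI − T is invertible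
and ‖(ζI − T)⁻¹‖ ≤ C·∑_{k≥0} |f̂(k)|. -/
theorem nikolski_lifting_resolvent
    {E : Type*} [NormedAddCommGroup E] [NormedSpace ℂ E] [FiniteDimensional ℂ E]
    (n : ℕ) (hn : 1 ≤ n) (hdim : Module.finrank ℂ E = n)
    (T : E →L[ℂ] E) (C : ℝ) (hC : 1 ≤ C) (hpb : ∀ j : ℕ, ‖T ^ j‖ ≤ C)
    (m : Polynomial ℂ) (hm : Polynomial.aeval T m = 0)
    (ζ : ℂ) (fc gc : ℕ → ℂ)
    (hfc : Summable fun k : ℕ => ‖fc k‖) (hgc : Summable fun k : ℕ => ‖gc k‖)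
    (hrep : ∀ z : ℂ, ‖z‖ < 1 →
      (ζ - z) * ∑' k : ℕ, fc k * z ^ k = 1 + m.eval z * ∑' k : ℕ, gc k * z ^ k) :
    ∃ S : E →L[ℂ] E, (ζ • 1 - T) * S = 1 ∧ S * (ζ • 1 - T) = 1 ∧
      ‖S‖ ≤ C * ∑' k : ℕ, ‖fc k‖ := by
  classical
  set d := m.natDegree + 1 with hdef
  set w : ℕ → ℂ := fun k => if k = 0 then ζ else if k = 1 then (-1 : ℂ) else 0 with hwdef
  set pc : ℕ → ℂ := fun k => m.coeff k with hpcdef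
  set dl : ℕ → ℂ := fun k => if k = 0 then 1 else 0 with hdldef
  set a : ℕ → ℂ := fun n => ∑ kl ∈ antidiagonal n, w kl.1 * fc kl.2 with hadef
  set c : ℕ → ℂ := fun n => ∑ kl ∈ antidiagonal n, pc kl.1 * gc kl.2 with hcdef
  have hw : Summable fun k => ‖w k‖ := by
    apply summable_of_ne_finset_zero (s := ({0, 1} : Finset ℕ))
    intro k hk
    simp only [mem_insert, mem_singleton, not_or] at hk
    simp [hwdef, hk.1, hk.2]
  have hpc : Summable fun k => ‖pc k‖ := by
    apply summable_of_ne_finset_zero (s := Finset.range d)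
    intro k hk
    simp only [Finset.mem_range, not_lt] at hk
    simp [hpcdef, Polynomial.coeff_eq_zero_of_natDegree_lt (Nat.lt_of_succ_le hk)]
  have hdl : Summable fun k => ‖dl k‖ := by
    apply summable_of_ne_finset_zero (s := ({0} : Finset ℕ))
    intro k hk
    simp only [mem_singleton] at hk
    simp [hdldef, hk]
  have ha : Summable fun n => ‖a n‖ :=
    summable_norm_sum_mul_antidiagonal_of_summable_norm hw hfc
  have hc : Summable fun n => ‖c n‖ :=
    summable_norm_sum_mul_antidiagonal_of_summable_norm hpc hgc
  -- scalar coefficient identity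
  have hcoef : ∀ k, a k = dl k + c k := by
    apply coeff_eq_aux _ _ ha (Summable.of_nonneg_of_le (fun k => norm_nonneg _)
      (fun k => norm_add_le _ _) (hdl.add hc))
    intro z hz
    -- LHS via Cauchy product
    have hWz : ∑' k : ℕ, w k * z ^ k = ζ - z := by
      rw [tsum_eq_sum (s := ({0, 1} : Finset ℕ)) (by
        intro k hk
        simp only [mem_insert, mem_singleton, not_or] at hk
        simp [hwdef, hk.1, hk.2])]
      rw [Finset.sum_pair (by norm_num : (0:ℕ) ≠ 1)]
      simp [hwdef]
      ring
    have hPz : ∑' k : ℕ, pc k * z ^ k = m.eval z := by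
      rw [tsum_eq_sum (s := Finset.range d) (by
        intro k hk
        simp only [Finset.mem_range, not_lt] at hk
        simp [hpcdef, Polynomial.coeff_eq_zero_of_natDegree_lt (Nat.lt_of_succ_le hk)])]
      rw [Polynomial.eval_eq_sum_range]
    have hDz : ∑' k : ℕ, dl k * z ^ k = 1 := by
      rw [tsum_eq_sum (s := ({0} : Finset ℕ)) (by
        intro k hk
        simp only [mem_singleton] at hk
        simp [hdldef, hk])]
      simp [hdldef]
    have cauchy : ∀ (u v : ℕ → ℂ), (Summable fun k => ‖u k‖) → (Summable fun k => ‖v k‖) →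
        (∑' k : ℕ, u k * z ^ k) * (∑' k : ℕ, v k * z ^ k) =
        ∑' n : ℕ, (∑ kl ∈ antidiagonal n, u kl.1 * v kl.2) * z ^ n := by
      intro u v hu hv
      rw [tsum_mul_tsum_eq_tsum_sum_antidiagonal_of_summable_norm
        (summable_norm_mul_pow u hu hz.le) (summable_norm_mul_pow v hv hz.le)]
      apply tsum_congr
      intro n
      rw [Finset.sum_mul]
      apply Finset.sum_congr rfl
      intro kl hkl
      rw [HasAntidiagonal.mem_antidiagonal] at hkl
      rw [← hkl, pow_add]
      ring
    have hL : ∑' k : ℕ, a k * z ^ k = (ζ - z) * ∑' k : ℕ, fc k * z ^ k := by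
      rw [← hWz, cauchy w fc hw hfc]
    have hR : ∑' k : ℕ, (dl k + c k) * z ^ k = 1 + m.eval z * ∑' k : ℕ, gc k * z ^ k := by
      have h1 := (summable_norm_mul_pow dl hdl hz.le).of_norm
      have h2 := (summable_norm_mul_pow c hc hz.le).of_norm
      have : ∀ k : ℕ, (dl k + c k) * z ^ k = dl k * z ^ k + c k * z ^ k := fun k => by ring
      rw [tsum_congr this, Summable.tsum_add h1 h2, hDz, ← hPz, cauchy pc gc hpc hgc]
    rw [hL, hR, hrep z hz]
  -- operator side
  have hop : ∀ (u : ℕ → ℂ), (Summable fun k => ‖u k‖) →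
      Summable fun k : ℕ => ‖u k • T ^ k‖ := by
    intro u hu
    apply Summable.of_nonneg_of_le (fun k => norm_nonneg _) _ (hu.mul_right C)
    intro k
    calc ‖u k • T ^ k‖ ≤ ‖u k‖ * ‖T ^ k‖ := ContinuousLinearMap.opNorm_smul_le _ _
      _ ≤ ‖u k‖ * C := mul_le_mul_of_nonneg_left (hpb k) (norm_nonneg _)
  set S : E →L[ℂ] E := ∑' k : ℕ, fc k • T ^ k with hSdef
  have hWsum : (∑' k : ℕ, w k • T ^ k) = ζ • 1 - T := by
    rw [tsum_eq_sum (s := ({0, 1} : Finset ℕ)) (by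
      intro k hk
      simp only [mem_insert, mem_singleton, not_or] at hk
      simp [hwdef, hk.1, hk.2])]
    rw [Finset.sum_pair (by norm_num : (0:ℕ) ≠ 1)]
    simp [hwdef, sub_eq_add_neg]
  have hPsum : (∑' k : ℕ, pc k • T ^ k) = 0 := by
    rw [tsum_eq_sum (s := Finset.range d) (by
      intro k hk
      simp only [Finset.mem_range, not_lt] at hk
      simp [hpcdef, Polynomial.coeff_eq_zero_of_natDegree_lt (Nat.lt_of_succ_le hk)])]
    rw [← Polynomial.aeval_eq_sum_range, hm]
  have hDsum : (∑' k : ℕ, dl k • T ^ k) = 1 := by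
    rw [tsum_eq_sum (s := ({0} : Finset ℕ)) (by
      intro k hk
      simp only [mem_singleton] at hk
      simp [hdldef, hk])]
    simp [hdldef]
  have opCauchy : ∀ (u v : ℕ → ℂ), (Summable fun k => ‖u k‖) → (Summable fun k => ‖v k‖) →
      (∑' k : ℕ, u k • T ^ k) * (∑' k : ℕ, v k • T ^ k) =
      ∑' n : ℕ, (∑ kl ∈ antidiagonal n, u kl.1 * v kl.2) • T ^ n := by
    intro u v hu hv
    rw [tsum_mul_tsum_eq_tsum_sum_antidiagonal_of_summable_norm (hop u hu) (hop v hv)]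
    apply tsum_congr
    intro n
    rw [Finset.sum_smul]
    apply Finset.sum_congr rfl
    intro kl hkl
    rw [HasAntidiagonal.mem_antidiagonal] at hkl
    rw [← hkl, pow_add, smul_mul_assoc, mul_smul_comm, smul_smul]
  have key : ∑' n : ℕ, a n • T ^ n = 1 := by
    have h1 := (hop dl hdl).of_norm
    have h2 := (hop c hc).of_norm
    calc ∑' n : ℕ, a n • T ^ n = ∑' n : ℕ, (dl n • T ^ n + c n • T ^ n) := by
          apply tsum_congr
          intro n
          rw [hcoef n, add_smul]
      _ = (∑' n : ℕ, dl n • T ^ n) + ∑' n : ℕ, c n • T ^ n := Summable.tsum_add h1 h2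
      _ = 1 + (∑' k : ℕ, pc k • T ^ k) * (∑' k : ℕ, gc k • T ^ k) := by
          rw [hDsum, opCauchy pc gc hpc hgc]
      _ = 1 := by rw [hPsum, zero_mul, add_zero]
  refine ⟨S, ?_, ?_, ?_⟩
  · rw [← hWsum, hSdef, opCauchy w fc hw hfc]
    exact key
  · rw [← hWsum, hSdef, opCauchy fc w hfc hw]
    rw [← key]
    apply tsum_congr
    intro n
    congr 1
    conv_lhs => rw [← Finset.HasAntidiagonal.map_swap_antidiagonal]
    rw [Finset.sum_map]
    simp only [hadef]
    exact Finset.sum_congr rfl fun kl _ => mul_comm _ _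
  · calc ‖S‖ ≤ ∑' k : ℕ, ‖fc k • T ^ k‖ := norm_tsum_le_tsum_norm (hop fc hfc)
      _ ≤ ∑' k : ℕ, ‖fc k‖ * C := by
          apply Summable.tsum_le_tsum _ (hop fc hfc) (hfc.mul_right C)
          intro k
          calc ‖fc k • T ^ k‖ ≤ ‖fc k‖ * ‖T ^ k‖ := ContinuousLinearMap.opNorm_smul_le _ _
            _ ≤ ‖fc k‖ * C := mul_le_mul_of_nonneg_left (hpb k) (norm_nonneg _)
      _ = C * ∑' k : ℕ, ‖fc k‖ := by rw [tsum_mul_right, mul_comm]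
end
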